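/- arXiv:2105.09827 — 2 statements merged into one kernel-verified Lean document; each statement's English description precedes it below -/
import Mathlib

section
/- Let G=(V,E) be a finite simple graph with n = |V| and m = |E|, let h ≥ 2 be an even integer, and let Q ⊆ V be a clique of G with |Q| = h inducing the complete subgraph K_h. Then the even-clique inequality ∑_{v∈V(K_h)} x_v + ∑_{e∈E(K_h)} y_e ≤ h/2 is valid for the Total Matching Polytope P_T(G), and it is facet-defining: there exist n+m affinely independent characteristic vectors of total matchings of G satisfying it with equality. -/
open Finset

variable {V : Type*}

/-- A total matching of a graph `G`: a set `S` of vertices and a set `M` of edges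
such that the elements of `S ∪ M` are pairwise non-adjacent. -/
def IsTotalMatching (G : SimpleGraph V) (S : Finset V) (M : Finset (Sym2 V)) : Prop :=
  (↑M ⊆ G.edgeSet) ∧
  (∀ v ∈ S, ∀ w ∈ S, ¬ G.Adj v w) ∧
  (∀ e ∈ M, ∀ f ∈ M, e ≠ f → ∀ v : V, ¬(v ∈ e ∧ v ∈ f)) ∧
  (∀ v ∈ S, ∀ e ∈ M, v ∉ e)

/-- Characteristic vector of a total matching, with vertex coordinates and edge coordinates. -/
def charVec [DecidableEq V] (S : Finset V) (M : Finset (Sym2 V)) :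
    (V → ℝ) × (Sym2 V → ℝ) :=
  (fun v => if v ∈ S then 1 else 0, fun e => if e ∈ M then 1 else 0)

/-- The total matching polytope: convex hull of characteristic vectors of total matchings. -/
def totalMatchingPolytope [DecidableEq V] (G : SimpleGraph V) :
    Set ((V → ℝ) × (Sym2 V → ℝ)) :=
  convexHull ℝ {p | ∃ S M, IsTotalMatching G S M ∧ p = charVec S M}

/-! ### Auxiliary machinery -/

section Aux

set_option linter.unusedSectionVars false

lemma afi_finset_iff {α M : Type*} [AddCommGroup M] [Module ℝ M] (F : Finset α) (f : α → M) :
    AffineIndependent ℝ (fun q : F => f q) ↔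
      ∀ W : α → ℝ, ∑ q ∈ F, W q = 0 → ∑ q ∈ F, W q • f q = 0 → ∀ q ∈ F, W q = 0 := by
  classical
  constructor
  · intro h W hW0 hWv q hq
    have := affineIndependent_iff.1 h Finset.univ (fun i => W i.1) ?_ ?_ ⟨q, hq⟩ (mem_univ _)
    · exact this
    · rw [Finset.univ_eq_attach, Finset.sum_attach F (fun q => W q)]; exact hW0
    · rw [Finset.univ_eq_attach, Finset.sum_attach F (fun q => W q • f q)]; exact hWv
  · intro h
    rw [affineIndependent_iff]
    intro s w hw0 hwv i hi
    set W : α → ℝ := fun q => if h : q ∈ F then (if ⟨q, h⟩ ∈ s then w ⟨q, h⟩ else 0) else 0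
      with hWdef
    have hWat : ∀ i : { x // x ∈ F }, W i.1 = if i ∈ s then w i else 0 := by
      intro i; simp [hWdef]
    have h1 : ∑ q ∈ F, W q = ∑ j ∈ s, w j := by
      rw [← Finset.sum_attach F (fun q => W q)]
      rw [Finset.sum_congr rfl (fun i _ => hWat i)]
      rw [Finset.sum_ite_mem _ s (fun i => w i), ← Finset.univ_eq_attach, Finset.univ_inter]
    have h2 : ∑ q ∈ F, W q • f q = ∑ j ∈ s, w j • f j.1 := by
      rw [← Finset.sum_attach F (fun q => W q • f q)]
      rw [Finset.sum_congr rfl (fun i _ => by rw [hWat i, ite_smul, zero_smul])]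
      rw [Finset.sum_ite_mem _ s (fun i => w i • f i.1), ← Finset.univ_eq_attach,
        Finset.univ_inter]
    have := h W (by rw [h1]; exact hw0) (by rw [h2]; exact hwv) i.1 i.2
    rw [hWat i, if_pos hi] at this
    exact this

variable [DecidableEq V]

lemma afi_charVec_iff [DecidableEq V] (F : Finset (Finset V × Finset (Sym2 V))) :
    AffineIndependent ℝ (fun q : F => charVec q.1.1 q.1.2) ↔
      ∀ W : Finset V × Finset (Sym2 V) → ℝ, ∑ q ∈ F, W q = 0 →
        ∑ q ∈ F, W q • charVec q.1 q.2 = 0 → ∀ q ∈ F, W q = 0 :=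
  afi_finset_iff F (fun q => charVec q.1 q.2)

/-- pairwise disjointness of a set of edges -/
def PD (M : Finset (Sym2 V)) : Prop :=
  ∀ e ∈ M, ∀ f ∈ M, e ≠ f → ∀ v : V, ¬(v ∈ e ∧ v ∈ f)

lemma PD.insert {M : Finset (Sym2 V)} {g : Sym2 V} (h1 : PD M)
    (h2 : ∀ f ∈ M, ∀ v : V, ¬(v ∈ g ∧ v ∈ f)) : PD (insert g M) := by
  intro e he f hf hne v hv
  rcases Finset.mem_insert.1 he with he' | he' <;> rcases Finset.mem_insert.1 hf with hf' | hf'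
  · exact hne (he'.trans hf'.symm)
  · subst he'; exact h2 f hf' v hv
  · subst hf'; exact h2 e he' v ⟨hv.2, hv.1⟩
  · exact h1 e he' f hf' hne v hv

lemma PD.subset {M N : Finset (Sym2 V)} (h : PD N) (hMN : M ⊆ N) : PD M :=
  fun e he f hf hne v hv => h e (hMN he) f (hMN hf) hne v hv

lemma PD.eq_of_mem {P : Finset (Sym2 V)} (hP : PD P) {e f : Sym2 V} (he : e ∈ P) (hf : f ∈ P)
    {v : V} (hv1 : v ∈ e) (hv2 : v ∈ f) : e = f := by
  by_contra hne
  exact hP e he f hf hne v ⟨hv1, hv2⟩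

noncomputable def pmE (P : Finset (Sym2 V)) (i : V) : Sym2 V :=
  if h : ∃ e ∈ P, i ∈ e then h.choose else s(i, i)

lemma pmE_spec {P : Finset (Sym2 V)} {i : V} (h : ∃ e ∈ P, i ∈ e) :
    pmE P i ∈ P ∧ i ∈ pmE P i := by
  rw [pmE, dif_pos h]
  exact ⟨h.choose_spec.1, h.choose_spec.2⟩

open Classical in
noncomputable def otherV (f : Sym2 V) (z : V) : V :=
  if h : ∃ y, f = s(z, y) then h.choose else z

lemma otherV_spec {f : Sym2 V} {z : V} (h : z ∈ f) : f = s(z, otherV f z) := by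
  classical
  have h' : ∃ y, f = s(z, y) := Sym2.mem_iff_exists.1 h
  rw [otherV]
  rw [dif_pos h']
  exact h'.choose_spec

lemma otherV_mem {f : Sym2 V} {z : V} (h : z ∈ f) : otherV f z ∈ f := by
  obtain ⟨y, hy⟩ := Sym2.mem_iff_exists.1 h
  subst hy
  rcases Sym2.eq_iff.1 (otherV_spec h) with ⟨-, h2⟩ | ⟨h2, -⟩
  · rw [← h2]; exact Sym2.mem_mk_right _ _
  · rw [← h2]; exact Sym2.mem_mk_left _ _

lemma filter_mem_edge {Q : Finset V} {e : Sym2 V} (he : ¬e.IsDiag) (hsub : ∀ v ∈ e, v ∈ Q) :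
    (Q.filter (· ∈ e)).card = 2 := by
  induction e using Sym2.inductionOn with
  | _ a b =>
    have hab : a ≠ b := by simpa using he
    have : Q.filter (· ∈ s(a, b)) = {a, b} := by
      ext v
      simp only [Finset.mem_filter, Sym2.mem_iff, Finset.mem_insert, Finset.mem_singleton]
      constructor
      · exact fun h => h.2
      · rintro (rfl | rfl)
        · exact ⟨hsub v (by simp), Or.inl rfl⟩
        · exact ⟨hsub v (by simp), Or.inr rfl⟩
    rw [this, Finset.card_pair hab]

set_option linter.unusedSectionVars false

/-- evaluation of the vertex coordinate `v`, as a linear map -/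
noncomputable def evalX (v : V) : ((V → ℝ) × (Sym2 V → ℝ)) →ₗ[ℝ] ℝ :=
  (LinearMap.proj v).comp (LinearMap.fst ℝ _ _)

/-- evaluation of the edge coordinate `e`, as a linear map -/
noncomputable def evalY (e : Sym2 V) : ((V → ℝ) × (Sym2 V → ℝ)) →ₗ[ℝ] ℝ :=
  (LinearMap.proj e).comp (LinearMap.snd ℝ _ _)

/-- the linear functional of the clique inequality -/
noncomputable def evalL (Q0 : Finset V) (E0 : Finset (Sym2 V)) :
    ((V → ℝ) × (Sym2 V → ℝ)) →ₗ[ℝ] ℝ :=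
  (∑ v ∈ Q0, evalX v) + ∑ e ∈ E0, evalY e

lemma evalX_charVec (v : V) (S : Finset V) (M : Finset (Sym2 V)) :
    evalX v (charVec S M) = if v ∈ S then 1 else 0 := rfl

lemma evalY_charVec (e : Sym2 V) (S : Finset V) (M : Finset (Sym2 V)) :
    evalY e (charVec S M) = if e ∈ M then 1 else 0 := rfl

lemma evalL_apply (Q0 : Finset V) (E0 : Finset (Sym2 V)) (p : (V → ℝ) × (Sym2 V → ℝ)) :
    evalL Q0 E0 p = ∑ v ∈ Q0, p.1 v + ∑ e ∈ E0, p.2 e := by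
  simp [evalL, evalX, evalY, LinearMap.sum_apply]

lemma evalL_charVec (Q0 : Finset V) (E0 : Finset (Sym2 V)) (S : Finset V)
    (M : Finset (Sym2 V)) :
    evalL Q0 E0 (charVec S M) =
      ((Q0.filter (· ∈ S)).card : ℝ) + ((E0.filter (· ∈ M)).card : ℝ) := by
  rw [evalL_apply]
  simp only [charVec, Finset.sum_boole]

lemma filter_of_subset {α : Type*} [DecidableEq α] {s t : Finset α} (h : t ⊆ s) :
    s.filter (· ∈ t) = t := by
  ext x
  simp only [Finset.mem_filter]
  exact ⟨fun hx => hx.2, fun hx => ⟨h hx, hx⟩⟩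

lemma filter_insert_nm {α : Type*} [DecidableEq α] {s t : Finset α} {g : α} (hg : g ∉ s)
    (h : t ⊆ s) : s.filter (· ∈ insert g t) = t := by
  ext x
  simp only [Finset.mem_filter, Finset.mem_insert]
  constructor
  · rintro ⟨hx, rfl | hx'⟩
    · exact absurd hx hg
    · exact hx'
  · intro hx
    exact ⟨h hx, Or.inr hx⟩

lemma filter_insert_nm' {α : Type*} [DecidableEq α] {s t : Finset α} {g : α} (hg : g ∉ s) :
    s.filter (· ∈ insert g t) = s.filter (· ∈ t) := by
  ext x
  simp only [Finset.mem_filter, Finset.mem_insert]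
  constructor
  · rintro ⟨hx, rfl | hx'⟩
    · exact absurd hx hg
    · exact ⟨hx, hx'⟩
  · rintro ⟨hx, hx'⟩
    exact ⟨hx, Or.inr hx'⟩

lemma filter_singleton_nm {α : Type*} [DecidableEq α] {s : Finset α} {a : α} (ha : a ∉ s) :
    s.filter (· ∈ ({a} : Finset α)) = ∅ := by
  ext x
  simp only [Finset.mem_filter, Finset.mem_singleton, Finset.notMem_empty, iff_false]
  rintro ⟨hx, rfl⟩
  exact ha hx

lemma charVec_insert {S : Finset V} {M : Finset (Sym2 V)} {g : Sym2 V} (hg : g ∉ M) :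
    charVec S (insert g M) =
      charVec S M + ((0 : V → ℝ), fun e => if e = g then (1 : ℝ) else 0) := by
  unfold charVec
  refine Prod.ext ?_ ?_
  · funext v; simp
  funext e
  show _ = (fun e => if e ∈ M then (1:ℝ) else 0) e + (fun e => if e = g then (1:ℝ) else 0) e
  by_cases he : e = g
  · subst he
    simp [hg]
  · simp [Finset.mem_insert, he]

def IsPM (G : SimpleGraph V) (R : Finset V) (P : Finset (Sym2 V)) : Prop :=
  (↑P ⊆ G.edgeSet) ∧ PD P ∧ (∀ e ∈ P, ∀ v ∈ e, v ∈ R) ∧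
  (∀ v ∈ R, ∃ e ∈ P, v ∈ e) ∧ 2 * P.card = R.card

lemma exists_pm (G : SimpleGraph V) :
    ∀ n (R : Finset V), R.card = n → G.IsClique ↑R → Even R.card → ∃ P, IsPM G R P := by
  intro n
  induction n using Nat.strong_induction_on with
  | _ n ih =>
    intro R hn hcl hev
    rcases Finset.eq_empty_or_nonempty R with rfl | ⟨u, hu⟩
    · exact ⟨∅, by simp [IsPM, PD], by simp [IsPM, PD], by simp [IsPM, PD], by simp [IsPM, PD],
        by simp⟩
    · have hc2 : 2 ≤ R.card := by
        rcases hev with ⟨k, hk⟩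
        have : 0 < R.card := Finset.card_pos.2 ⟨u, hu⟩
        omega
      have hne : (R.erase u).Nonempty := by
        rw [← Finset.card_pos, Finset.card_erase_of_mem hu]; omega
      obtain ⟨w, hw⟩ := hne
      have huw : u ≠ w := fun h => (Finset.mem_erase.1 hw).1 h.symm
      have hwR : w ∈ R := Finset.mem_of_mem_erase hw
      set R' := (R.erase u).erase w with hR'
      have hR'sub : R' ⊆ R := fun x hx =>
        Finset.mem_of_mem_erase (Finset.mem_of_mem_erase hx)
      have hucard : R'.card = R.card - 2 := by
        rw [hR', Finset.card_erase_of_mem hw, Finset.card_erase_of_mem hu]; omega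
      have huR' : u ∉ R' := fun h => (Finset.mem_erase.1 (Finset.mem_of_mem_erase h)).1 rfl
      have hwR' : w ∉ R' := fun h => (Finset.mem_erase.1 h).1 rfl
      obtain ⟨P', hP'⟩ := ih (R.card - 2) (by omega) R' hucard
        (hcl.subset (by exact_mod_cast hR'sub))
        (by rcases hev with ⟨k, hk⟩; exact ⟨k - 1, by omega⟩)
      obtain ⟨hP1, hP2, hP3, hP4, hP5⟩ := hP'
      have hadj : G.Adj u w := hcl hu hwR huw
      have hnot : s(u, w) ∉ P' := fun h => huR' (hP3 _ h u (Sym2.mem_mk_left u w))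
      refine ⟨insert s(u, w) P', ?_, ?_, ?_, ?_, ?_⟩
      · intro e he
        rcases Finset.mem_insert.1 he with rfl | he
        · exact hadj
        · exact hP1 he
      · refine hP2.insert (fun f hf v hv => ?_)
        rcases Sym2.mem_iff.1 hv.1 with rfl | rfl
        · exact huR' (hP3 f hf v hv.2)
        · exact hwR' (hP3 f hf v hv.2)
      · intro e he v hv
        rcases Finset.mem_insert.1 he with rfl | he
        · rcases Sym2.mem_iff.1 hv with rfl | rfl <;> assumption
        · exact hR'sub (hP3 e he v hv)
      · intro v hv
        by_cases h1 : v = u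
        · exact ⟨s(u, w), Finset.mem_insert_self _ _, by simp [h1]⟩
        · by_cases h2 : v = w
          · exact ⟨s(u, w), Finset.mem_insert_self _ _, by simp [h2]⟩
          · obtain ⟨e, he, hve⟩ := hP4 v (by simp [hR', Finset.mem_erase, h1, h2, hv])
            exact ⟨e, Finset.mem_insert_of_mem he, hve⟩
      · rw [Finset.card_insert_of_notMem hnot]; omega

lemma valid_nat [Fintype V] (G : SimpleGraph V) [DecidableRel G.Adj] {Q S : Finset V}
    {M : Finset (Sym2 V)} (hQ : G.IsClique ↑Q) (heven : Even Q.card)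
    (hTM : IsTotalMatching G S M) :
    2 * ((Q.filter (· ∈ S)).card +
      ((G.edgeFinset.filter (fun e => ∀ v ∈ e, v ∈ Q)).filter (· ∈ M)).card) ≤ Q.card := by
  obtain ⟨hM1, hM2, hM3, hM4⟩ := hTM
  set S' := Q.filter (· ∈ S) with hS'
  set M' := (G.edgeFinset.filter (fun e => ∀ v ∈ e, v ∈ Q)).filter (· ∈ M) with hM'
  have hM'E : ∀ e ∈ M', e ∈ G.edgeFinset ∧ (∀ v ∈ e, v ∈ Q) ∧ e ∈ M := by
    intro e he
    simp only [hM', Finset.mem_filter] at he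
    exact ⟨he.1.1, he.1.2, he.2⟩
  set C := M'.biUnion (fun e => Q.filter (· ∈ e)) with hC
  have hCcard : C.card = 2 * M'.card := by
    rw [hC, Finset.card_biUnion]
    · rw [Finset.sum_congr rfl (fun e he => filter_mem_edge
        (G.not_isDiag_of_mem_edgeFinset (hM'E e he).1) (hM'E e he).2.1)]
      rw [Finset.sum_const, smul_eq_mul, mul_comm]
    · intro e he f hf hne
      rw [Function.onFun, Finset.disjoint_left]
      intro v hv hv'
      exact hM3 e (hM'E e he).2.2 f (hM'E f hf).2.2 hne v
        ⟨(Finset.mem_filter.1 hv).2, (Finset.mem_filter.1 hv').2⟩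
  have hCQ : C ⊆ Q := by
    intro v hv
    obtain ⟨e, _, hv⟩ := Finset.mem_biUnion.1 hv
    exact (Finset.mem_filter.1 hv).1
  have hdisj : Disjoint S' C := by
    rw [Finset.disjoint_left]
    intro v hv hv'
    obtain ⟨e, he, hv'⟩ := Finset.mem_biUnion.1 hv'
    exact hM4 v (Finset.mem_filter.1 hv).2 e (hM'E e he).2.2 (Finset.mem_filter.1 hv').2
  have hun : S'.card + 2 * M'.card ≤ Q.card := by
    rw [← hCcard, ← Finset.card_union_of_disjoint hdisj]
    exact Finset.card_le_card (Finset.union_subset (Finset.filter_subset _ _) hCQ)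
  rcases Finset.eq_empty_or_nonempty S' with hS'e | ⟨v0, hv0⟩
  · rw [hS'e] at hun ⊢
    simp only [Finset.card_empty, zero_add] at hun ⊢
    omega
  · have hS'1 : S'.card = 1 := by
      have hle : S'.card ≤ 1 := by
        rw [Finset.card_le_one]
        intro a ha b hb
        by_contra hne
        exact hM2 a (Finset.mem_filter.1 ha).2 b (Finset.mem_filter.1 hb).2
          (hQ (Finset.mem_filter.1 ha).1 (Finset.mem_filter.1 hb).1 hne)
      have : 1 ≤ S'.card := Finset.card_pos.2 ⟨v0, hv0⟩
      omega
    obtain ⟨k, hk⟩ := heven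
    omega

lemma coordsum_X {F : Finset (Finset V × Finset (Sym2 V))} {W : Finset V × Finset (Sym2 V) → ℝ}
    (hv : ∑ q ∈ F, W q • charVec q.1 q.2 = 0) (v : V) :
    ∑ q ∈ F, (if v ∈ q.1 then W q else 0) = 0 := by
  have h := congrArg (evalX v) hv
  rw [map_sum, map_zero] at h
  have h2 : ∑ q ∈ F, (if v ∈ q.1 then W q else 0) = ∑ q ∈ F, (evalX v) (W q • charVec q.1 q.2) := by
    refine Finset.sum_congr rfl fun q _ => ?_
    rw [map_smul, evalX_charVec, smul_eq_mul, mul_ite, mul_one, mul_zero]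
  rw [h2]; exact h

lemma coordsum_Y {F : Finset (Finset V × Finset (Sym2 V))} {W : Finset V × Finset (Sym2 V) → ℝ}
    (hv : ∑ q ∈ F, W q • charVec q.1 q.2 = 0) (e : Sym2 V) :
    ∑ q ∈ F, (if e ∈ q.2 then W q else 0) = 0 := by
  have h := congrArg (evalY e) hv
  rw [map_sum, map_zero] at h
  have h2 : ∑ q ∈ F, (if e ∈ q.2 then W q else 0) = ∑ q ∈ F, (evalY e) (W q • charVec q.1 q.2) := by
    refine Finset.sum_congr rfl fun q _ => ?_
    rw [map_smul, evalY_charVec, smul_eq_mul, mul_ite, mul_one, mul_zero]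
  rw [h2]; exact h

lemma coordsum_L {F : Finset (Finset V × Finset (Sym2 V))} {W : Finset V × Finset (Sym2 V) → ℝ}
    (hv : ∑ q ∈ F, W q • charVec q.1 q.2 = 0) (Q0 : Finset V) (E0 : Finset (Sym2 V)) :
    ∑ q ∈ F, W q * (((Q0.filter (· ∈ q.1)).card : ℝ) + ((E0.filter (· ∈ q.2)).card : ℝ)) = 0 := by
  have h := congrArg (evalL Q0 E0) hv
  rw [map_sum, map_zero] at h
  have h2 : ∑ q ∈ F, W q * (((Q0.filter (· ∈ q.1)).card : ℝ) + ((E0.filter (· ∈ q.2)).card : ℝ))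
      = ∑ q ∈ F, (evalL Q0 E0) (W q • charVec q.1 q.2) := by
    refine Finset.sum_congr rfl fun q _ => ?_
    rw [map_smul, evalL_charVec, smul_eq_mul]
  rw [h2]; exact h

lemma triple_card {β : Type*} [DecidableEq β] {a b c : β} (hab : a ≠ b) (hac : a ≠ c)
    (hbc : b ≠ c) : ({a, b, c} : Finset β).card = 3 := by
  rw [Finset.card_insert_of_notMem (by simp [hab, hac]),
    Finset.card_insert_of_notMem (by simp [hbc]), Finset.card_singleton]

lemma sum_split5 {ι κ β M : Type*} [DecidableEq β] [AddCommMonoid M]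
    {s : Finset ι} {t : Finset κ} {f1 : ι → β} {f2 f3 : κ → β} {a b c : β}
    (hf1 : ∀ x ∈ s, ∀ y ∈ s, f1 x = f1 y → x = y)
    (hf2 : ∀ x ∈ t, ∀ y ∈ t, f2 x = f2 y → x = y)
    (hf3 : ∀ x ∈ t, ∀ y ∈ t, f3 x = f3 y → x = y)
    (d12 : Disjoint (s.image f1) (t.image f2))
    (d13 : Disjoint (s.image f1 ∪ t.image f2) (t.image f3))
    (d14 : Disjoint ((s.image f1 ∪ t.image f2) ∪ t.image f3) ({a, b, c} : Finset β))
    (hab : a ≠ b) (hac : a ≠ c) (hbc : b ≠ c)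
    (g : β → M) :
    ∑ q ∈ ((s.image f1 ∪ t.image f2) ∪ t.image f3) ∪ {a, b, c}, g q
      = ((∑ i ∈ s, g (f1 i) + ∑ i ∈ t, g (f2 i)) + ∑ i ∈ t, g (f3 i)) + (g a + g b + g c) := by
  rw [Finset.sum_union d14, Finset.sum_union d13, Finset.sum_union d12,
    Finset.sum_image hf1, Finset.sum_image hf2, Finset.sum_image hf3]
  congr 1
  rw [Finset.sum_insert (by simp [hab, hac]), Finset.sum_insert (by simp [hbc]),
    Finset.sum_singleton, add_assoc]

lemma card_split5 {ι κ β : Type*} [DecidableEq β]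
    {s : Finset ι} {t : Finset κ} {f1 : ι → β} {f2 f3 : κ → β} {a b c : β}
    (hf1 : ∀ x ∈ s, ∀ y ∈ s, f1 x = f1 y → x = y)
    (hf2 : ∀ x ∈ t, ∀ y ∈ t, f2 x = f2 y → x = y)
    (hf3 : ∀ x ∈ t, ∀ y ∈ t, f3 x = f3 y → x = y)
    (d12 : Disjoint (s.image f1) (t.image f2))
    (d13 : Disjoint (s.image f1 ∪ t.image f2) (t.image f3))
    (d14 : Disjoint ((s.image f1 ∪ t.image f2) ∪ t.image f3) ({a, b, c} : Finset β))
    (hab : a ≠ b) (hac : a ≠ c) (hbc : b ≠ c) :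
    (((s.image f1 ∪ t.image f2) ∪ t.image f3) ∪ ({a, b, c} : Finset β)).card
      = ((s.card + t.card) + t.card) + 3 := by
  rw [Finset.card_union_of_disjoint d14, Finset.card_union_of_disjoint d13,
    Finset.card_union_of_disjoint d12, Finset.card_image_of_injOn hf1,
    Finset.card_image_of_injOn hf2, Finset.card_image_of_injOn hf3, triple_card hab hac hbc]

end Aux


set_option maxHeartbeats 1600000 in
lemma local_family [Fintype V] [DecidableEq V] (G : SimpleGraph V) [DecidableRel G.Adj] :
    ∀ n (Q : Finset V), Q.card = n → G.IsClique ↑Q → Even Q.card →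
    ∃ F : Finset (Finset V × Finset (Sym2 V)),
      F.card = Q.card + (G.edgeFinset.filter (fun e => ∀ v ∈ e, v ∈ Q)).card ∧
      (∀ q ∈ F, IsTotalMatching G q.1 q.2 ∧ q.1 ⊆ Q ∧
        (∀ e ∈ q.2, e ∈ G.edgeFinset ∧ ∀ v ∈ e, v ∈ Q) ∧
        2 * (q.1.card + q.2.card) = Q.card) ∧
      AffineIndependent ℝ (fun q : F => charVec q.1.1 q.1.2) := by
  intro n
  induction n using Nat.strong_induction_on with
  | _ n ih =>
  intro Q hn hQ hev
  rcases Finset.eq_empty_or_nonempty Q with rfl | ⟨u, hu⟩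
  · refine ⟨∅, ?_, by simp, ?_⟩
    swap
    · haveI : IsEmpty ({ x // x ∈ (∅ : Finset (Finset V × Finset (Sym2 V))) }) :=
        ⟨fun a => absurd a.2 (Finset.notMem_empty _)⟩
      exact affineIndependent_of_subsingleton ℝ _
    have hEQ : G.edgeFinset.filter (fun e => ∀ v ∈ e, v ∈ (∅ : Finset V)) = ∅ := by
      rw [Finset.filter_eq_empty_iff]
      intro e _
      induction e using Sym2.inductionOn with
      | _ x y => push_neg; exact ⟨x, by simp, by simp⟩
    rw [hEQ]
    simp
  · -- basic setup of u, w, Q'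
    have hc2 : 2 ≤ Q.card := by
      rcases hev with ⟨k, hk⟩
      have : 0 < Q.card := Finset.card_pos.2 ⟨u, hu⟩
      omega
    have hne : (Q.erase u).Nonempty := by
      rw [← Finset.card_pos, Finset.card_erase_of_mem hu]; omega
    obtain ⟨w, hwE⟩ := hne
    have huw : u ≠ w := fun h => (Finset.mem_erase.1 hwE).1 h.symm
    have hw : w ∈ Q := Finset.mem_of_mem_erase hwE
    set Q' := (Q.erase u).erase w with hQ'def
    have hQ'Q : Q' ⊆ Q := fun x hx => Finset.mem_of_mem_erase (Finset.mem_of_mem_erase hx)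
    have hQ'card : Q'.card = Q.card - 2 := by
      rw [hQ'def, Finset.card_erase_of_mem hwE, Finset.card_erase_of_mem hu]; omega
    have huQ' : u ∉ Q' := fun h => (Finset.mem_erase.1 (Finset.mem_of_mem_erase h)).1 rfl
    have hwQ' : w ∉ Q' := fun h => (Finset.mem_erase.1 h).1 rfl
    have hmemQ' : ∀ x, x ∈ Q' ↔ x ≠ w ∧ x ≠ u ∧ x ∈ Q := by
      intro x; rw [hQ'def]; simp [Finset.mem_erase, and_assoc]
    have hQ'clique : G.IsClique ↑Q' := hQ.subset (by exact_mod_cast hQ'Q)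
    have hQ'even : Even Q'.card := by
      rcases hev with ⟨k, hk⟩; exact ⟨k - 1, by omega⟩
    have hadjuw : G.Adj u w := hQ hu hw huw
    have hadju : ∀ i ∈ Q', G.Adj u i := fun i hi => hQ hu (hQ'Q hi) (fun h => huQ' (h ▸ hi))
    have hadjw : ∀ i ∈ Q', G.Adj w i := fun i hi => hQ hw (hQ'Q hi) (fun h => hwQ' (h ▸ hi))
    set EQb := G.edgeFinset.filter (fun e => ∀ v ∈ e, v ∈ Q) with hEQb
    set EQ' := G.edgeFinset.filter (fun e => ∀ v ∈ e, v ∈ Q') with hEQ'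
    have hEQ'nu : ∀ e ∈ EQ', u ∉ e := fun e he hue => huQ' ((Finset.mem_filter.1 he).2 u hue)
    have hEQ'nw : ∀ e ∈ EQ', w ∉ e := fun e he hwe => hwQ' ((Finset.mem_filter.1 he).2 w hwe)
    -- decomposition of the clique edge set
    have hEQdec : EQb = ((EQ' ∪ Q'.image (fun i => s(u, i))) ∪ Q'.image (fun i => s(w, i)))
        ∪ {s(u, w)} := by
      ext e
      simp only [Finset.mem_union, Finset.mem_image, Finset.mem_singleton]
      constructor
      · intro he
        obtain ⟨he1, he2⟩ := Finset.mem_filter.1 he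
        have hnd : ¬ e.IsDiag := G.not_isDiag_of_mem_edgeFinset he1
        by_cases hue : u ∈ e
        · have hspec := otherV_spec hue
          have hce : otherV e u ∈ e := otherV_mem hue
          have hcu : otherV e u ≠ u := by
            intro hcu
            rw [hcu] at hspec
            exact hnd (by rw [hspec]; exact Sym2.mk_isDiag_iff.2 rfl)
          by_cases hwe : w ∈ e
          · right
            rcases Sym2.mem_iff.1 (hspec ▸ hwe) with h | h
            · exact absurd h huw.symm
            · rw [hspec, h]
          · left; left; right
            refine ⟨otherV e u, ?_, hspec.symm⟩
            rw [hmemQ']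
            exact ⟨fun hh => hwe (hh ▸ hce), hcu, he2 _ hce⟩
        · by_cases hwe : w ∈ e
          · have hspec := otherV_spec hwe
            have hce : otherV e w ∈ e := otherV_mem hwe
            have hcw : otherV e w ≠ w := by
              intro hcw
              rw [hcw] at hspec
              exact hnd (by rw [hspec]; exact Sym2.mk_isDiag_iff.2 rfl)
            left; right
            refine ⟨otherV e w, ?_, hspec.symm⟩
            rw [hmemQ']
            exact ⟨hcw, fun hh => hue (hh ▸ hce), he2 _ hce⟩
          · left; left; left
            refine Finset.mem_filter.2 ⟨he1, fun v hv => ?_⟩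
            rw [hmemQ']
            exact ⟨fun hh => hwe (hh ▸ hv), fun hh => hue (hh ▸ hv), he2 v hv⟩
      · rintro (((he | ⟨i, hi, rfl⟩) | ⟨i, hi, rfl⟩) | rfl)
        · obtain ⟨he1, he2⟩ := Finset.mem_filter.1 he
          exact Finset.mem_filter.2 ⟨he1, fun v hv => hQ'Q (he2 v hv)⟩
        · refine Finset.mem_filter.2 ⟨SimpleGraph.mem_edgeFinset.2 (hadju i hi), fun v hv => ?_⟩
          rcases Sym2.mem_iff.1 hv with rfl | rfl
          · exact hu
          · exact hQ'Q hi
        · refine Finset.mem_filter.2 ⟨SimpleGraph.mem_edgeFinset.2 (hadjw i hi), fun v hv => ?_⟩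
          rcases Sym2.mem_iff.1 hv with rfl | rfl
          · exact hw
          · exact hQ'Q hi
        · refine Finset.mem_filter.2 ⟨SimpleGraph.mem_edgeFinset.2 hadjuw, fun v hv => ?_⟩
          rcases Sym2.mem_iff.1 hv with rfl | rfl
          · exact hu
          · exact hw
    -- elementary distinctions between the various clique edges
    have hui_ne_uw : ∀ i ∈ Q', s(u, i) ≠ s(u, w) := by
      intro i hi hh
      rcases Sym2.eq_iff.1 hh with ⟨-, h2⟩ | ⟨h1, -⟩
      · exact hwQ' (h2 ▸ hi)
      · exact huw h1
    have hwi_ne_uw : ∀ i ∈ Q', s(w, i) ≠ s(u, w) := by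
      intro i hi hh
      rcases Sym2.eq_iff.1 hh with ⟨h1, -⟩ | ⟨-, h2⟩
      · exact huw h1.symm
      · exact huQ' (h2 ▸ hi)
    have hui_ne_wj : ∀ i ∈ Q', ∀ j ∈ Q', s(u, i) ≠ s(w, j) := by
      intro i hi j hj hh
      rcases Sym2.eq_iff.1 hh with ⟨h1, -⟩ | ⟨h1, -⟩
      · exact huw h1
      · exact (h1 ▸ huQ') hj
    have hui_uj : ∀ i ∈ Q', ∀ j ∈ Q', s(u, i) = s(u, j) ↔ i = j := by
      intro i hi j hj
      constructor
      · intro hh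
        rcases Sym2.eq_iff.1 hh with ⟨-, h2⟩ | ⟨h1, -⟩
        · exact h2
        · exact absurd hj (h1 ▸ huQ')
      · rintro rfl; rfl
    have hwi_wj : ∀ i ∈ Q', ∀ j ∈ Q', s(w, i) = s(w, j) ↔ i = j := by
      intro i hi j hj
      constructor
      · intro hh
        rcases Sym2.eq_iff.1 hh with ⟨-, h2⟩ | ⟨h1, -⟩
        · exact h2
        · exact absurd hj (h1 ▸ hwQ')
      · rintro rfl; rfl
    have hEQcard : EQb.card = ((EQ'.card + Q'.card) + Q'.card) + 1 := by
      have d1 : Disjoint (EQ' ∪ Q'.image (fun i => s(u, i))) (Q'.image (fun i => s(w, i))) := by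
        rw [Finset.disjoint_right]
        intro e he1 he2
        obtain ⟨i, hi, rfl⟩ := Finset.mem_image.1 he1
        rcases Finset.mem_union.1 he2 with he | he
        · exact hEQ'nw _ he (Sym2.mem_mk_left _ _)
        · obtain ⟨j, hj, hji⟩ := Finset.mem_image.1 he
          exact hui_ne_wj j hj i hi hji
      have d2 : Disjoint EQ' (Q'.image (fun i => s(u, i))) := by
        rw [Finset.disjoint_right]
        intro e he1 he2
        obtain ⟨i, hi, rfl⟩ := Finset.mem_image.1 he1
        exact hEQ'nu _ he2 (Sym2.mem_mk_left _ _)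
      have d3 : Disjoint ((EQ' ∪ Q'.image (fun i => s(u, i))) ∪ Q'.image (fun i => s(w, i)))
          ({s(u, w)} : Finset (Sym2 V)) := by
        rw [Finset.disjoint_right]
        intro e he hee
        rw [Finset.mem_singleton] at he
        subst he
        rcases Finset.mem_union.1 hee with hee | hee
        · rcases Finset.mem_union.1 hee with hee | hee
          · exact hEQ'nu _ hee (Sym2.mem_mk_left _ _)
          · obtain ⟨j, hj, hji⟩ := Finset.mem_image.1 hee
            exact hui_ne_uw j hj hji
        · obtain ⟨j, hj, hji⟩ := Finset.mem_image.1 hee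
          exact hwi_ne_uw j hj hji
      rw [hEQdec, Finset.card_union_of_disjoint d3, Finset.card_union_of_disjoint d1,
        Finset.card_union_of_disjoint d2, Finset.card_image_of_injOn, Finset.card_image_of_injOn,
        Finset.card_singleton]
      · intro x hx y hy hxy
        exact (hwi_wj x hx y hy).1 hxy
      · intro x hx y hy hxy
        exact (hui_uj x hx y hy).1 hxy
    -- the induction hypothesis applied to Q'
    obtain ⟨F', hF'card, hF'mem, hF'ai⟩ := ih (Q.card - 2) (by omega) Q' (by omega)
      hQ'clique hQ'even
    obtain ⟨P', hP1, hP2, hP3, hP4, hP5⟩ := exists_pm G Q'.card Q' rfl hQ'clique hQ'even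
    rcases Finset.eq_empty_or_nonempty Q' with hQ'e | hQ'ne
    · -- base case : Q = {u, w}
      have hQuw : Q = {u, w} := by
        apply Finset.Subset.antisymm
        · intro x hx
          by_contra hxm
          simp only [Finset.mem_insert, Finset.mem_singleton, not_or] at hxm
          have : x ∈ Q' := (hmemQ' x).2 ⟨hxm.2, hxm.1, hx⟩
          rw [hQ'e] at this
          exact absurd this (Finset.notMem_empty x)
        · intro x hx
          rcases Finset.mem_insert.1 hx with rfl | hx
          · exact hu
          · rw [Finset.mem_singleton] at hx; subst hx; exact hw
      have hQcard2 : Q.card = 2 := by rw [hQuw]; exact Finset.card_pair huw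
      have hEQ'empty : EQ' = ∅ := by
        rw [hEQ', Finset.filter_eq_empty_iff]
        intro e _
        push_neg
        induction e using Sym2.inductionOn with
        | _ x y => exact ⟨x, by simp, by rw [hQ'e]; exact Finset.notMem_empty x⟩
      have hEQsing : EQb = {s(u, w)} := by
        rw [hEQdec, hQ'e, hEQ'empty]
        simp
      have n1 : (({u}, ∅) : Finset V × Finset (Sym2 V)) ≠ ({w}, ∅) := by
        intro hcon
        exact huw (Finset.singleton_injective (congrArg Prod.fst hcon))
      have n2 : (({u}, ∅) : Finset V × Finset (Sym2 V)) ≠ (∅, {s(u, w)}) := by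
        intro hcon
        have := congrArg Prod.fst hcon
        simp at this
      have n3 : (({w}, ∅) : Finset V × Finset (Sym2 V)) ≠ (∅, {s(u, w)}) := by
        intro hcon
        have := congrArg Prod.fst hcon
        simp at this
      refine ⟨{({u}, ∅), ({w}, ∅), (∅, {s(u, w)})}, ?_, ?_, ?_⟩
      · rw [triple_card n1 n2 n3, hEQsing, hQcard2, Finset.card_singleton]
      · intro q hq
        simp only [Finset.mem_insert, Finset.mem_singleton] at hq
        rcases hq with rfl | rfl | rfl
        · refine ⟨⟨by simp, ?_, by simp [PD], by simp⟩, by simp [hu], by simp, ?_⟩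
          · intro v hv w' hw'
            rw [Finset.mem_singleton] at hv hw'
            subst hv; subst hw'
            simp
          · simp [hQcard2]
        · refine ⟨⟨by simp, ?_, by simp [PD], by simp⟩, by simp [hw], by simp, ?_⟩
          · intro v hv w' hw'
            rw [Finset.mem_singleton] at hv hw'
            subst hv; subst hw'
            simp
          · simp [hQcard2]
        · refine ⟨⟨?_, by simp, ?_, by simp⟩, by simp, ?_, ?_⟩
          · intro e he
            rw [Finset.coe_singleton, Set.mem_singleton_iff] at he
            subst he
            exact hadjuw
          · intro e he f hf hnef v hv
            rw [Finset.mem_singleton] at he hf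
            exact hnef (he.trans hf.symm)
          · intro e he
            rw [Finset.mem_singleton] at he
            subst he
            refine ⟨SimpleGraph.mem_edgeFinset.2 hadjuw, fun v hv => ?_⟩
            rcases Sym2.mem_iff.1 hv with rfl | rfl
            · exact hu
            · exact hw
          · simp [hQcard2]
      · refine (afi_charVec_iff _).2 ?_
        intro W hs hv q hq
        have hnm1 : (({u}, ∅) : Finset V × Finset (Sym2 V)) ∉
            ({({w}, ∅), (∅, {s(u, w)})} : Finset (Finset V × Finset (Sym2 V))) := by
          simp [n1, n2]
        have hnm2 : (({w}, ∅) : Finset V × Finset (Sym2 V)) ∉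
            ({(∅, {s(u, w)})} : Finset (Finset V × Finset (Sym2 V))) := by
          simp [n3]
        have e1 := coordsum_X hv u
        have e2 := coordsum_X hv w
        have e3 := coordsum_Y hv s(u, w)
        rw [Finset.sum_insert hnm1, Finset.sum_insert hnm2, Finset.sum_singleton] at e1 e2 e3
        simp [huw, huw.symm] at e1 e2 e3
        simp only [Finset.mem_insert, Finset.mem_singleton] at hq
        rcases hq with rfl | rfl | rfl
        · exact e1
        · exact e2
        · exact e3
    · -- Inductive step: Q' is nonempty
      obtain ⟨a0, ha0⟩ := hQ'ne
      have hpm : ∀ i ∈ Q', pmE P' i ∈ P' ∧ i ∈ pmE P' i := fun i hi => pmE_spec (hP4 i hi)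
      set f0 := pmE P' a0 with hf0def
      have hf0P : f0 ∈ P' := (hpm a0 ha0).1
      have ha0f0 : a0 ∈ f0 := (hpm a0 ha0).2
      set b0 := otherV f0 a0 with hb0def
      have hf0eq : f0 = s(a0, b0) := otherV_spec ha0f0
      have hb0f0 : b0 ∈ f0 := otherV_mem ha0f0
      have hb0Q' : b0 ∈ Q' := hP3 f0 hf0P b0 hb0f0
      have ha0b0 : a0 ≠ b0 := by
        intro hcon
        have hd := G.not_isDiag_of_mem_edgeSet (hP1 hf0P)
        have : f0.IsDiag := by rw [hf0eq, hcon]; exact Sym2.mk_isDiag_iff.2 rfl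
        exact hd this
      have huP' : ∀ e ∈ P', u ∉ e := fun e he hue => huQ' (hP3 e he u hue)
      have hwP' : ∀ e ∈ P', w ∉ e := fun e he hwe => hwQ' (hP3 e he w hwe)
      have hP'EQ' : P' ⊆ EQ' :=
        fun e he => Finset.mem_filter.2 ⟨SimpleGraph.mem_edgeFinset.2 (hP1 he), hP3 e he⟩
      have hk1 : 1 ≤ P'.card := by
        have h0 : 0 < Q'.card := Finset.card_pos.2 ⟨a0, ha0⟩
        omega
      have hF'S : ∀ q ∈ F', q.1 ⊆ Q' := fun q hq => (hF'mem q hq).2.1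
      have hF'E : ∀ q ∈ F', ∀ e ∈ q.2, e ∈ G.edgeFinset ∧ ∀ v ∈ e, v ∈ Q' :=
        fun q hq => (hF'mem q hq).2.2.1
      have hF'q2EQ' : ∀ q ∈ F', q.2 ⊆ EQ' :=
        fun q hq e he => Finset.mem_filter.2 ⟨(hF'E q hq e he).1, (hF'E q hq e he).2⟩
      have hF'nuE : ∀ q ∈ F', ∀ e ∈ q.2, u ∉ e :=
        fun q hq e he hue => huQ' ((hF'E q hq e he).2 u hue)
      have hF'nwE : ∀ q ∈ F', ∀ e ∈ q.2, w ∉ e :=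
        fun q hq e he hwe => hwQ' ((hF'E q hq e he).2 w hwe)
      have hF'uS : ∀ q ∈ F', u ∉ q.1 := fun q hq hc => huQ' (hF'S q hq hc)
      have hF'wS : ∀ q ∈ F', w ∉ q.1 := fun q hq hc => hwQ' (hF'S q hq hc)
      have heuwF' : ∀ q ∈ F', s(u, w) ∉ q.2 :=
        fun q hq hc => hF'nuE q hq _ hc (Sym2.mem_mk_left _ _)
      set Up : Finset V × Finset (Sym2 V) := ({u}, P') with hUpdef
      set Wp : Finset V × Finset (Sym2 V) := ({w}, P') with hWpdef
      set Zp : Finset V × Finset (Sym2 V) :=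
        (∅, insert s(u, a0) (insert s(w, b0) (P'.erase f0))) with hZpdef
      set ext : Finset V × Finset (Sym2 V) → Finset V × Finset (Sym2 V) :=
        fun q => (q.1, insert s(u, w) q.2) with hextdef
      set Af : V → Finset V × Finset (Sym2 V) :=
        fun i => ({w}, insert s(u, i) (P'.erase (pmE P' i))) with hAfdef
      set Bf : V → Finset V × Finset (Sym2 V) :=
        fun i => ({u}, insert s(w, i) (P'.erase (pmE P' i))) with hBfdef
      -- membership facts for the edge coordinates
      have Yext_uw : ∀ q, s(u, w) ∈ (ext q).2 := fun q => Finset.mem_insert_self _ _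
      have Yext : ∀ q ∈ F', ∀ g : Sym2 V, (u ∈ g ∨ w ∈ g) → g ≠ s(u, w) → g ∉ (ext q).2 := by
        intro q hq g hg hgne hmem
        rcases Finset.mem_insert.1 hmem with hc | hc
        · exact hgne hc
        · rcases hg with hg | hg
          · exact hF'nuE q hq g hc hg
          · exact hF'nwE q hq g hc hg
      have YP' : ∀ g : Sym2 V, (u ∈ g ∨ w ∈ g) → g ∉ P' := by
        intro g hg hmem
        rcases hg with hg | hg
        · exact huP' g hmem hg
        · exact hwP' g hmem hg
      have YAf_ui : ∀ i ∈ Q', ∀ j ∈ Q', (s(u, i) ∈ (Af j).2 ↔ i = j) := by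
        intro i hi j hj
        constructor
        · intro hmem
          rcases Finset.mem_insert.1 hmem with hc | hc
          · exact (hui_uj i hi j hj).1 hc
          · exact absurd (Sym2.mem_mk_left u i) (huP' _ (Finset.mem_of_mem_erase hc))
        · rintro rfl
          exact Finset.mem_insert_self _ _
      have YAf_w : ∀ j ∈ Q', ∀ g : Sym2 V, w ∈ g → g ∉ (Af j).2 := by
        intro j hj g hgw hmem
        rcases Finset.mem_insert.1 hmem with hc | hc
        · subst hc
          rcases Sym2.mem_iff.1 hgw with hc | hc
          · exact huw hc.symm
          · exact hwQ' (hc ▸ hj)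
        · exact hwP' _ (Finset.mem_of_mem_erase hc) hgw
      have YBf_wi : ∀ i ∈ Q', ∀ j ∈ Q', (s(w, i) ∈ (Bf j).2 ↔ i = j) := by
        intro i hi j hj
        constructor
        · intro hmem
          rcases Finset.mem_insert.1 hmem with hc | hc
          · exact (hwi_wj i hi j hj).1 hc
          · exact absurd (Sym2.mem_mk_left w i) (hwP' _ (Finset.mem_of_mem_erase hc))
        · rintro rfl
          exact Finset.mem_insert_self _ _
      have YBf_u : ∀ j ∈ Q', ∀ g : Sym2 V, u ∈ g → g ∉ (Bf j).2 := by
        intro j hj g hgu hmem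
        rcases Finset.mem_insert.1 hmem with hc | hc
        · subst hc
          rcases Sym2.mem_iff.1 hgu with hc | hc
          · exact huw hc
          · exact huQ' (hc ▸ hj)
        · exact huP' _ (Finset.mem_of_mem_erase hc) hgu
      have YZp_ui : ∀ i ∈ Q', (s(u, i) ∈ Zp.2 ↔ i = a0) := by
        intro i hi
        constructor
        · intro hmem
          rcases Finset.mem_insert.1 hmem with hc | hc
          · exact (hui_uj i hi a0 ha0).1 hc
          · rcases Finset.mem_insert.1 hc with hc | hc
            · exact absurd hc (hui_ne_wj i hi b0 hb0Q')
            · exact absurd (Sym2.mem_mk_left u i) (huP' _ (Finset.mem_of_mem_erase hc))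
        · rintro rfl
          exact Finset.mem_insert_self _ _
      have YZp_wi : ∀ i ∈ Q', (s(w, i) ∈ Zp.2 ↔ i = b0) := by
        intro i hi
        constructor
        · intro hmem
          rcases Finset.mem_insert.1 hmem with hc | hc
          · exact absurd hc.symm (hui_ne_wj a0 ha0 i hi)
          · rcases Finset.mem_insert.1 hc with hc | hc
            · exact (hwi_wj i hi b0 hb0Q').1 hc
            · exact absurd (Sym2.mem_mk_left w i) (hwP' _ (Finset.mem_of_mem_erase hc))
        · rintro rfl
          exact Finset.mem_insert_of_mem (Finset.mem_insert_self _ _)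
      have YZp_uw : s(u, w) ∉ Zp.2 := by
        intro hmem
        rcases Finset.mem_insert.1 hmem with hc | hc
        · exact hui_ne_uw a0 ha0 hc.symm
        · rcases Finset.mem_insert.1 hc with hc | hc
          · exact hwi_ne_uw b0 hb0Q' hc.symm
          · exact huP' _ (Finset.mem_of_mem_erase hc) (Sym2.mem_mk_left _ _)
      -- injectivity of the three families
      have hextInj : ∀ x ∈ F', ∀ y ∈ F', ext x = ext y → x = y := by
        intro x hx y hy hxy
        have h12 := Prod.ext_iff.1 hxy
        have h1 : x.1 = y.1 := h12.1
        have h2 : insert s(u, w) x.2 = insert s(u, w) y.2 := h12.2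
        have h3 : x.2 = y.2 := by
          rw [← Finset.erase_insert (heuwF' x hx), ← Finset.erase_insert (heuwF' y hy), h2]
        exact Prod.ext h1 h3
      have hAfInj : ∀ x ∈ Q', ∀ y ∈ Q', Af x = Af y → x = y := by
        intro x hx y hy hxy
        have h2 : (Af x).2 = (Af y).2 := congrArg Prod.snd hxy
        have hmem : s(u, x) ∈ (Af y).2 := h2 ▸ Finset.mem_insert_self _ _
        exact (YAf_ui x hx y hy).1 hmem
      have hBfInj : ∀ x ∈ Q', ∀ y ∈ Q', Bf x = Bf y → x = y := by
        intro x hx y hy hxy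
        have h2 : (Bf x).2 = (Bf y).2 := congrArg Prod.snd hxy
        have hmem : s(w, x) ∈ (Bf y).2 := h2 ▸ Finset.mem_insert_self _ _
        exact (YBf_wi x hx y hy).1 hmem
      -- disjointness
      have dis12 : Disjoint (F'.image ext) (Q'.image Af) := by
        rw [Finset.disjoint_left]
        intro q hq1 hq2
        obtain ⟨r, hr, rfl⟩ := Finset.mem_image.1 hq1
        obtain ⟨i, hi, hAi⟩ := Finset.mem_image.1 hq2
        have hmem : s(u, w) ∈ (Af i).2 := by rw [hAi]; exact Yext_uw r
        exact YAf_w i hi _ (Sym2.mem_mk_right u w) hmem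
      have dis13 : Disjoint (F'.image ext ∪ Q'.image Af) (Q'.image Bf) := by
        rw [Finset.disjoint_left]
        intro q hq1 hq2
        obtain ⟨i, hi, hBi⟩ := Finset.mem_image.1 hq2
        rcases Finset.mem_union.1 hq1 with hq1 | hq1
        · obtain ⟨r, hr, rfl⟩ := Finset.mem_image.1 hq1
          have hmem : s(u, w) ∈ (Bf i).2 := by rw [hBi]; exact Yext_uw r
          exact YBf_u i hi _ (Sym2.mem_mk_left u w) hmem
        · obtain ⟨j, hj, hAj⟩ := Finset.mem_image.1 hq1
          rw [← hBi] at hAj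
          have := congrArg Prod.fst hAj
          exact huw (Finset.singleton_injective this).symm
      have dis14 : Disjoint ((F'.image ext ∪ Q'.image Af) ∪ Q'.image Bf)
          ({Up, Wp, Zp} : Finset (Finset V × Finset (Sym2 V))) := by
        rw [Finset.disjoint_left]
        intro q hq1 hq2
        simp only [Finset.mem_insert, Finset.mem_singleton] at hq2
        rcases Finset.mem_union.1 hq1 with hq1 | hq1
        · rcases Finset.mem_union.1 hq1 with hq1 | hq1
          · obtain ⟨r, hr, rfl⟩ := Finset.mem_image.1 hq1
            have hx := Yext_uw r
            rcases hq2 with hc | hc | hc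
            · rw [hc] at hx
              exact YP' _ (Or.inl (Sym2.mem_mk_left _ _)) hx
            · rw [hc] at hx
              exact YP' _ (Or.inl (Sym2.mem_mk_left _ _)) hx
            · rw [hc] at hx
              exact YZp_uw hx
          · obtain ⟨i, hi, rfl⟩ := Finset.mem_image.1 hq1
            rcases hq2 with hc | hc | hc
            · exact huw (Finset.singleton_injective (congrArg Prod.fst hc)).symm
            · have hx : s(u, i) ∈ (Af i).2 := Finset.mem_insert_self _ _
              rw [hc] at hx
              exact YP' _ (Or.inl (Sym2.mem_mk_left _ _)) hx
            · exact Finset.singleton_ne_empty w (congrArg Prod.fst hc)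
        · obtain ⟨i, hi, rfl⟩ := Finset.mem_image.1 hq1
          rcases hq2 with hc | hc | hc
          · have hx : s(w, i) ∈ (Bf i).2 := Finset.mem_insert_self _ _
            rw [hc] at hx
            exact YP' _ (Or.inr (Sym2.mem_mk_left _ _)) hx
          · exact huw (Finset.singleton_injective (congrArg Prod.fst hc))
          · exact Finset.singleton_ne_empty u (congrArg Prod.fst hc)
      have hUW : Up ≠ Wp := fun hc => huw (Finset.singleton_injective (congrArg Prod.fst hc))
      have hUZ : Up ≠ Zp := fun hc => Finset.singleton_ne_empty u (congrArg Prod.fst hc)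
      have hWZ : Wp ≠ Zp := fun hc => Finset.singleton_ne_empty w (congrArg Prod.fst hc)
      refine ⟨((F'.image ext ∪ Q'.image Af) ∪ Q'.image Bf) ∪ {Up, Wp, Zp}, ?_, ?_, ?_⟩
      · rw [card_split5 hextInj hAfInj hBfInj dis12 dis13 dis14 hUW hUZ hWZ]
        rw [← hEQ'] at hF'card
        omega
      · -- membership properties
        intro q hq
        rcases Finset.mem_union.1 hq with hq1 | hq1
        · rcases Finset.mem_union.1 hq1 with hq2 | hq2
          · rcases Finset.mem_union.1 hq2 with hq3 | hq3
            · -- extended old points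
              obtain ⟨r, hr, rfl⟩ := Finset.mem_image.1 hq3
              obtain ⟨⟨hTM1, hTM2, hTM3, hTM4⟩, hS, hE, ht⟩ := hF'mem r hr
              refine ⟨⟨?_, hTM2, ?_, ?_⟩, fun v hv => hQ'Q (hS hv), ?_, ?_⟩
              · intro e he
                rw [Finset.coe_insert, Set.mem_insert_iff] at he
                rcases he with rfl | he
                · exact hadjuw
                · exact hTM1 he
              · refine PD.insert hTM3 (fun f hf v hv => ?_)
                rcases Sym2.mem_iff.1 hv.1 with rfl | rfl
                · exact hF'nuE r hr f hf hv.2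
                · exact hF'nwE r hr f hf hv.2
              · intro v hv e he
                rcases Finset.mem_insert.1 he with rfl | he
                · intro hve
                  rcases Sym2.mem_iff.1 hve with rfl | rfl
                  · exact hF'uS r hr hv
                  · exact hF'wS r hr hv
                · exact hTM4 v hv e he
              · intro e he
                rcases Finset.mem_insert.1 he with rfl | he
                · refine ⟨SimpleGraph.mem_edgeFinset.2 hadjuw, fun v hv => ?_⟩
                  rcases Sym2.mem_iff.1 hv with rfl | rfl
                  · exact hu
                  · exact hw
                · exact ⟨(hE e he).1, fun v hv => hQ'Q ((hE e he).2 v hv)⟩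
              · have hcnt : (insert s(u, w) r.2).card = r.2.card + 1 :=
                  Finset.card_insert_of_notMem (heuwF' r hr)
                show 2 * (r.1.card + (insert s(u, w) r.2).card) = Q.card
                rw [hcnt]
                omega
            · -- the points Af i
              obtain ⟨i, hi, rfl⟩ := Finset.mem_image.1 hq3
              have hfiP : pmE P' i ∈ P' := (hpm i hi).1
              have hifi : i ∈ pmE P' i := (hpm i hi).2
              refine ⟨⟨?_, ?_, ?_, ?_⟩, ?_, ?_, ?_⟩
              · intro e he
                rw [Finset.coe_insert, Set.mem_insert_iff] at he
                rcases he with rfl | he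
                · exact hadju i hi
                · exact hP1 (Finset.mem_of_mem_erase he)
              · intro v hv v' hv'
                rw [Finset.mem_singleton] at hv hv'
                subst hv; subst hv'
                simp
              · refine PD.insert (hP2.subset (Finset.erase_subset _ _)) (fun f hf v hv => ?_)
                rcases Sym2.mem_iff.1 hv.1 with rfl | rfl
                · exact huP' f (Finset.mem_of_mem_erase hf) hv.2
                · exact Finset.ne_of_mem_erase hf
                    (hP2.eq_of_mem (Finset.mem_of_mem_erase hf) hfiP hv.2 hifi)
              · intro v hv e he
                rw [Finset.mem_singleton] at hv
                subst hv
                rcases Finset.mem_insert.1 he with rfl | he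
                · intro hve
                  rcases Sym2.mem_iff.1 hve with rfl | rfl
                  · exact huw rfl
                  · exact hwQ' hi
                · exact hwP' e (Finset.mem_of_mem_erase he)
              · intro v hv
                rw [Finset.mem_singleton] at hv
                subst hv
                exact hw
              · intro e he
                rcases Finset.mem_insert.1 he with rfl | he
                · refine ⟨SimpleGraph.mem_edgeFinset.2 (hadju i hi), fun v hv => ?_⟩
                  rcases Sym2.mem_iff.1 hv with rfl | rfl
                  · exact hu
                  · exact hQ'Q hi
                · have he' := Finset.mem_of_mem_erase he
                  exact ⟨SimpleGraph.mem_edgeFinset.2 (hP1 he'),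
                    fun v hv => hQ'Q (hP3 e he' v hv)⟩
              · have hnm : s(u, i) ∉ P'.erase (pmE P' i) :=
                  fun hc => huP' _ (Finset.mem_of_mem_erase hc) (Sym2.mem_mk_left _ _)
                show 2 * (({w} : Finset V).card +
                  (insert s(u, i) (P'.erase (pmE P' i))).card) = Q.card
                rw [Finset.card_insert_of_notMem hnm, Finset.card_erase_of_mem hfiP,
                  Finset.card_singleton]
                omega
          · -- the points Bf i
            obtain ⟨i, hi, rfl⟩ := Finset.mem_image.1 hq2
            have hfiP : pmE P' i ∈ P' := (hpm i hi).1
            have hifi : i ∈ pmE P' i := (hpm i hi).2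
            refine ⟨⟨?_, ?_, ?_, ?_⟩, ?_, ?_, ?_⟩
            · intro e he
              rw [Finset.coe_insert, Set.mem_insert_iff] at he
              rcases he with rfl | he
              · exact hadjw i hi
              · exact hP1 (Finset.mem_of_mem_erase he)
            · intro v hv v' hv'
              rw [Finset.mem_singleton] at hv hv'
              subst hv; subst hv'
              simp
            · refine PD.insert (hP2.subset (Finset.erase_subset _ _)) (fun f hf v hv => ?_)
              rcases Sym2.mem_iff.1 hv.1 with rfl | rfl
              · exact hwP' f (Finset.mem_of_mem_erase hf) hv.2
              · exact Finset.ne_of_mem_erase hf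
                  (hP2.eq_of_mem (Finset.mem_of_mem_erase hf) hfiP hv.2 hifi)
            · intro v hv e he
              rw [Finset.mem_singleton] at hv
              subst hv
              rcases Finset.mem_insert.1 he with rfl | he
              · intro hve
                rcases Sym2.mem_iff.1 hve with rfl | rfl
                · exact huw rfl
                · exact huQ' hi
              · exact huP' e (Finset.mem_of_mem_erase he)
            · intro v hv
              rw [Finset.mem_singleton] at hv
              subst hv
              exact hu
            · intro e he
              rcases Finset.mem_insert.1 he with rfl | he
              · refine ⟨SimpleGraph.mem_edgeFinset.2 (hadjw i hi), fun v hv => ?_⟩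
                rcases Sym2.mem_iff.1 hv with rfl | rfl
                · exact hw
                · exact hQ'Q hi
              · have he' := Finset.mem_of_mem_erase he
                exact ⟨SimpleGraph.mem_edgeFinset.2 (hP1 he'),
                  fun v hv => hQ'Q (hP3 e he' v hv)⟩
            · have hnm : s(w, i) ∉ P'.erase (pmE P' i) :=
                fun hc => hwP' _ (Finset.mem_of_mem_erase hc) (Sym2.mem_mk_left _ _)
              show 2 * (({u} : Finset V).card +
                (insert s(w, i) (P'.erase (pmE P' i))).card) = Q.card
              rw [Finset.card_insert_of_notMem hnm, Finset.card_erase_of_mem hfiP,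
                Finset.card_singleton]
              omega
        · -- the three special points
          simp only [Finset.mem_insert, Finset.mem_singleton] at hq1
          have hUpgood : IsTotalMatching G Up.1 Up.2 ∧ Up.1 ⊆ Q ∧
              (∀ e ∈ Up.2, e ∈ G.edgeFinset ∧ ∀ v ∈ e, v ∈ Q) ∧
              2 * (Up.1.card + Up.2.card) = Q.card := by
            refine ⟨⟨hP1, ?_, hP2, ?_⟩, ?_, ?_, ?_⟩
            · intro v hv v' hv'
              rw [Finset.mem_singleton] at hv hv'
              subst hv; subst hv'
              simp
            · intro v hv e he
              rw [Finset.mem_singleton] at hv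
              subst hv
              exact huP' e he
            · intro v hv
              rw [Finset.mem_singleton] at hv
              subst hv
              exact hu
            · intro e he
              exact ⟨SimpleGraph.mem_edgeFinset.2 (hP1 he),
                fun v hv => hQ'Q (hP3 e he v hv)⟩
            · show 2 * (({u} : Finset V).card + P'.card) = Q.card
              rw [Finset.card_singleton]
              omega
          have hWpgood : IsTotalMatching G Wp.1 Wp.2 ∧ Wp.1 ⊆ Q ∧
              (∀ e ∈ Wp.2, e ∈ G.edgeFinset ∧ ∀ v ∈ e, v ∈ Q) ∧
              2 * (Wp.1.card + Wp.2.card) = Q.card := by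
            refine ⟨⟨hP1, ?_, hP2, ?_⟩, ?_, ?_, ?_⟩
            · intro v hv v' hv'
              rw [Finset.mem_singleton] at hv hv'
              subst hv; subst hv'
              simp
            · intro v hv e he
              rw [Finset.mem_singleton] at hv
              subst hv
              exact hwP' e he
            · intro v hv
              rw [Finset.mem_singleton] at hv
              subst hv
              exact hw
            · intro e he
              exact ⟨SimpleGraph.mem_edgeFinset.2 (hP1 he),
                fun v hv => hQ'Q (hP3 e he v hv)⟩
            · show 2 * (({w} : Finset V).card + P'.card) = Q.card
              rw [Finset.card_singleton]
              omega
          have hZpgood : IsTotalMatching G Zp.1 Zp.2 ∧ Zp.1 ⊆ Q ∧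
              (∀ e ∈ Zp.2, e ∈ G.edgeFinset ∧ ∀ v ∈ e, v ∈ Q) ∧
              2 * (Zp.1.card + Zp.2.card) = Q.card := by
            have hPDin : PD (insert s(w, b0) (P'.erase f0)) := by
              refine PD.insert (hP2.subset (Finset.erase_subset _ _)) (fun f hf v hv => ?_)
              rcases Sym2.mem_iff.1 hv.1 with rfl | rfl
              · exact hwP' f (Finset.mem_of_mem_erase hf) hv.2
              · exact Finset.ne_of_mem_erase hf
                  (hP2.eq_of_mem (Finset.mem_of_mem_erase hf) hf0P hv.2 hb0f0)
            refine ⟨⟨?_, by simp [Zp], ?_, by simp [Zp]⟩, by simp [Zp], ?_, ?_⟩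
            · intro e he
              rw [Finset.coe_insert, Set.mem_insert_iff] at he
              rcases he with rfl | he
              · exact hadju a0 ha0
              · rw [Finset.coe_insert, Set.mem_insert_iff] at he
                rcases he with rfl | he
                · exact hadjw b0 hb0Q'
                · exact hP1 (Finset.mem_of_mem_erase he)
            · refine PD.insert hPDin (fun f hf v hv => ?_)
              rcases Finset.mem_insert.1 hf with rfl | hf
              · rcases Sym2.mem_iff.1 hv.1 with rfl | rfl
                · rcases Sym2.mem_iff.1 hv.2 with rfl | rfl
                  · exact huw rfl
                  · exact huQ' hb0Q'
                · rcases Sym2.mem_iff.1 hv.2 with hc | hc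
                  · exact hwQ' (hc ▸ ha0)
                  · exact ha0b0 hc
              · rcases Sym2.mem_iff.1 hv.1 with rfl | rfl
                · exact huP' f (Finset.mem_of_mem_erase hf) hv.2
                · exact Finset.ne_of_mem_erase hf
                    (hP2.eq_of_mem (Finset.mem_of_mem_erase hf) hf0P hv.2 ha0f0)
            · intro e he
              rcases Finset.mem_insert.1 he with rfl | he
              · refine ⟨SimpleGraph.mem_edgeFinset.2 (hadju a0 ha0), fun v hv => ?_⟩
                rcases Sym2.mem_iff.1 hv with rfl | rfl
                · exact hu
                · exact hQ'Q ha0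
              · rcases Finset.mem_insert.1 he with rfl | he
                · refine ⟨SimpleGraph.mem_edgeFinset.2 (hadjw b0 hb0Q'), fun v hv => ?_⟩
                  rcases Sym2.mem_iff.1 hv with rfl | rfl
                  · exact hw
                  · exact hQ'Q hb0Q'
                · have he' := Finset.mem_of_mem_erase he
                  exact ⟨SimpleGraph.mem_edgeFinset.2 (hP1 he'),
                    fun v hv => hQ'Q (hP3 e he' v hv)⟩
            · have hn1 : s(w, b0) ∉ P'.erase f0 :=
                fun hc => hwP' _ (Finset.mem_of_mem_erase hc) (Sym2.mem_mk_left _ _)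
              have hn2 : s(u, a0) ∉ insert s(w, b0) (P'.erase f0) := by
                intro hc
                rcases Finset.mem_insert.1 hc with hc | hc
                · exact hui_ne_wj a0 ha0 b0 hb0Q' hc
                · exact huP' _ (Finset.mem_of_mem_erase hc) (Sym2.mem_mk_left _ _)
              show 2 * ((∅ : Finset V).card +
                (insert s(u, a0) (insert s(w, b0) (P'.erase f0))).card) = Q.card
              rw [Finset.card_insert_of_notMem hn2, Finset.card_insert_of_notMem hn1,
                Finset.card_erase_of_mem hf0P, Finset.card_empty]
              omega
          rcases hq1 with rfl | rfl | rfl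
          · exact hUpgood
          · exact hWpgood
          · exact hZpgood
      · -- affine independence
        refine (afi_charVec_iff _).2 ?_
        intro W hs hv q hq
        have hsplit := fun (g : Finset V × Finset (Sym2 V) → ℝ) =>
          sum_split5 hextInj hAfInj hBfInj dis12 dis13 dis14 hUW hUZ hWZ g
        -- component bridges
        have hext1 : ∀ r : Finset V × Finset (Sym2 V), (ext r).1 = r.1 := fun _ => rfl
        have hext2 : ∀ r : Finset V × Finset (Sym2 V), (ext r).2 = insert s(u, w) r.2 :=
          fun _ => rfl
        have hAf1 : ∀ j : V, (Af j).1 = {w} := fun _ => rfl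
        have hBf1 : ∀ j : V, (Bf j).1 = {u} := fun _ => rfl
        have hUp1 : Up.1 = {u} := rfl
        have hWp1 : Wp.1 = {w} := rfl
        have hZp1 : Zp.1 = (∅ : Finset V) := rfl
        have hUp2 : Up.2 = P' := rfl
        have hWp2 : Wp.2 = P' := rfl
        -- equation E1
        have E1 : ∀ i ∈ Q', W (Af i) + (if i = a0 then W Zp else 0) = 0 := by
          intro i hi
          have h := coordsum_Y hv s(u, i)
          rw [hsplit (fun q => if s(u, i) ∈ q.2 then W q else 0)] at h
          have c1 : ∑ r ∈ F', (if s(u, i) ∈ (ext r).2 then W (ext r) else 0) = 0 :=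
            Finset.sum_eq_zero (fun r hr =>
              if_neg (Yext r hr _ (Or.inl (Sym2.mem_mk_left _ _)) (hui_ne_uw i hi)))
          have c2 : ∑ j ∈ Q', (if s(u, i) ∈ (Af j).2 then W (Af j) else 0) = W (Af i) := by
            have hc : ∀ j ∈ Q', (if s(u, i) ∈ (Af j).2 then W (Af j) else 0)
                = (if j = i then W (Af j) else 0) := by
              intro j hj
              by_cases hji : j = i
              · subst hji
                rw [if_pos ((YAf_ui j hj j hj).2 rfl), if_pos rfl]
              · rw [if_neg (fun hc => hji ((YAf_ui i hi j hj).1 hc).symm), if_neg hji]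
            rw [Finset.sum_congr rfl hc, Finset.sum_ite_eq' Q' i (fun j => W (Af j)),
              if_pos hi]
          have c3 : ∑ j ∈ Q', (if s(u, i) ∈ (Bf j).2 then W (Bf j) else 0) = 0 :=
            Finset.sum_eq_zero (fun j hj => if_neg (YBf_u j hj _ (Sym2.mem_mk_left _ _)))
          have c4 : (if s(u, i) ∈ Up.2 then W Up else 0) = 0 :=
            if_neg (YP' _ (Or.inl (Sym2.mem_mk_left _ _)))
          have c5 : (if s(u, i) ∈ Wp.2 then W Wp else 0) = 0 :=
            if_neg (YP' _ (Or.inl (Sym2.mem_mk_left _ _)))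
          have c6 : (if s(u, i) ∈ Zp.2 then W Zp else 0) = (if i = a0 then W Zp else 0) := by
            by_cases hia : i = a0
            · rw [if_pos ((YZp_ui i hi).2 hia), if_pos hia]
            · rw [if_neg (fun hc => hia ((YZp_ui i hi).1 hc)), if_neg hia]
          rw [c1, c2, c3, c4, c5, c6] at h
          linarith [h]
        have E2 : ∀ i ∈ Q', W (Bf i) + (if i = b0 then W Zp else 0) = 0 := by
          intro i hi
          have h := coordsum_Y hv s(w, i)
          rw [hsplit (fun q => if s(w, i) ∈ q.2 then W q else 0)] at h
          have c1 : ∑ r ∈ F', (if s(w, i) ∈ (ext r).2 then W (ext r) else 0) = 0 :=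
            Finset.sum_eq_zero (fun r hr =>
              if_neg (Yext r hr _ (Or.inr (Sym2.mem_mk_left _ _)) (hwi_ne_uw i hi)))
          have c2 : ∑ j ∈ Q', (if s(w, i) ∈ (Af j).2 then W (Af j) else 0) = 0 :=
            Finset.sum_eq_zero (fun j hj => if_neg (YAf_w j hj _ (Sym2.mem_mk_left _ _)))
          have c3 : ∑ j ∈ Q', (if s(w, i) ∈ (Bf j).2 then W (Bf j) else 0) = W (Bf i) := by
            have hc : ∀ j ∈ Q', (if s(w, i) ∈ (Bf j).2 then W (Bf j) else 0)
                = (if j = i then W (Bf j) else 0) := by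
              intro j hj
              by_cases hji : j = i
              · subst hji
                rw [if_pos ((YBf_wi j hj j hj).2 rfl), if_pos rfl]
              · rw [if_neg (fun hc => hji ((YBf_wi i hi j hj).1 hc).symm), if_neg hji]
            rw [Finset.sum_congr rfl hc, Finset.sum_ite_eq' Q' i (fun j => W (Bf j)),
              if_pos hi]
          have c4 : (if s(w, i) ∈ Up.2 then W Up else 0) = 0 :=
            if_neg (YP' _ (Or.inr (Sym2.mem_mk_left _ _)))
          have c5 : (if s(w, i) ∈ Wp.2 then W Wp else 0) = 0 :=
            if_neg (YP' _ (Or.inr (Sym2.mem_mk_left _ _)))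
          have c6 : (if s(w, i) ∈ Zp.2 then W Zp else 0) = (if i = b0 then W Zp else 0) := by
            by_cases hib : i = b0
            · rw [if_pos ((YZp_wi i hi).2 hib), if_pos hib]
            · rw [if_neg (fun hc => hib ((YZp_wi i hi).1 hc)), if_neg hib]
          rw [c1, c2, c3, c4, c5, c6] at h
          linarith [h]
        have E3 : W Up + ∑ j ∈ Q', W (Bf j) = 0 := by
          have h := coordsum_X hv u
          rw [hsplit (fun q => if u ∈ q.1 then W q else 0)] at h
          have c1 : ∑ r ∈ F', (if u ∈ (ext r).1 then W (ext r) else 0) = 0 :=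
            Finset.sum_eq_zero (fun r hr => if_neg (by rw [hext1]; exact hF'uS r hr))
          have c2 : ∑ j ∈ Q', (if u ∈ (Af j).1 then W (Af j) else 0) = 0 :=
            Finset.sum_eq_zero (fun j hj => if_neg (by
              rw [hAf1]
              exact fun hc => huw (Finset.mem_singleton.1 hc)))
          have c3 : ∑ j ∈ Q', (if u ∈ (Bf j).1 then W (Bf j) else 0) = ∑ j ∈ Q', W (Bf j) :=
            Finset.sum_congr rfl (fun j hj => by
              rw [hBf1, if_pos (Finset.mem_singleton_self u)])
          have c4 : (if u ∈ Up.1 then W Up else 0) = W Up := by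
            rw [hUp1, if_pos (Finset.mem_singleton_self u)]
          have c5 : (if u ∈ Wp.1 then W Wp else 0) = 0 := by
            rw [hWp1, if_neg (fun hc => huw (Finset.mem_singleton.1 hc))]
          have c6 : (if u ∈ Zp.1 then W Zp else 0) = 0 := by
            rw [hZp1, if_neg (Finset.notMem_empty u)]
          rw [c1, c2, c3, c4, c5, c6] at h
          linarith [h]
        have E4 : W Wp + ∑ j ∈ Q', W (Af j) = 0 := by
          have h := coordsum_X hv w
          rw [hsplit (fun q => if w ∈ q.1 then W q else 0)] at h
          have c1 : ∑ r ∈ F', (if w ∈ (ext r).1 then W (ext r) else 0) = 0 :=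
            Finset.sum_eq_zero (fun r hr => if_neg (by rw [hext1]; exact hF'wS r hr))
          have c2 : ∑ j ∈ Q', (if w ∈ (Af j).1 then W (Af j) else 0) = ∑ j ∈ Q', W (Af j) :=
            Finset.sum_congr rfl (fun j hj => by
              rw [hAf1, if_pos (Finset.mem_singleton_self w)])
          have c3 : ∑ j ∈ Q', (if w ∈ (Bf j).1 then W (Bf j) else 0) = 0 :=
            Finset.sum_eq_zero (fun j hj => if_neg (by
              rw [hBf1]
              exact fun hc => huw (Finset.mem_singleton.1 hc).symm))
          have c4 : (if w ∈ Up.1 then W Up else 0) = 0 := by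
            rw [hUp1, if_neg (fun hc => huw (Finset.mem_singleton.1 hc).symm)]
          have c5 : (if w ∈ Wp.1 then W Wp else 0) = W Wp := by
            rw [hWp1, if_pos (Finset.mem_singleton_self w)]
          have c6 : (if w ∈ Zp.1 then W Zp else 0) = 0 := by
            rw [hZp1, if_neg (Finset.notMem_empty w)]
          rw [c1, c2, c3, c4, c5, c6] at h
          linarith [h]
        have E5 : ∑ r ∈ F', W (ext r) = 0 := by
          have h := coordsum_Y hv s(u, w)
          rw [hsplit (fun q => if s(u, w) ∈ q.2 then W q else 0)] at h
          have c1 : ∑ r ∈ F', (if s(u, w) ∈ (ext r).2 then W (ext r) else 0)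
              = ∑ r ∈ F', W (ext r) :=
            Finset.sum_congr rfl (fun r hr => if_pos (Yext_uw r))
          have c2 : ∑ j ∈ Q', (if s(u, w) ∈ (Af j).2 then W (Af j) else 0) = 0 :=
            Finset.sum_eq_zero (fun j hj => if_neg (YAf_w j hj _ (Sym2.mem_mk_right _ _)))
          have c3 : ∑ j ∈ Q', (if s(u, w) ∈ (Bf j).2 then W (Bf j) else 0) = 0 :=
            Finset.sum_eq_zero (fun j hj => if_neg (YBf_u j hj _ (Sym2.mem_mk_left _ _)))
          have c4 : (if s(u, w) ∈ Up.2 then W Up else 0) = 0 :=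
            if_neg (YP' _ (Or.inl (Sym2.mem_mk_left _ _)))
          have c5 : (if s(u, w) ∈ Wp.2 then W Wp else 0) = 0 :=
            if_neg (YP' _ (Or.inl (Sym2.mem_mk_left _ _)))
          have c6 : (if s(u, w) ∈ Zp.2 then W Zp else 0) = 0 := if_neg YZp_uw
          rw [c1, c2, c3, c4, c5, c6] at h
          linarith [h]
        -- summed versions of E1, E2
        have SA : ∑ j ∈ Q', W (Af j) = - W Zp := by
          have h : ∑ j ∈ Q', (W (Af j) + (if j = a0 then W Zp else 0)) = 0 :=
            (Finset.sum_congr rfl E1).trans Finset.sum_const_zero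
          rw [Finset.sum_add_distrib, Finset.sum_ite_eq' Q' a0 (fun _ => W Zp),
            if_pos ha0] at h
          linarith [h]
        have SB : ∑ j ∈ Q', W (Bf j) = - W Zp := by
          have h : ∑ j ∈ Q', (W (Bf j) + (if j = b0 then W Zp else 0)) = 0 :=
            (Finset.sum_congr rfl E2).trans Finset.sum_const_zero
          rw [Finset.sum_add_distrib, Finset.sum_ite_eq' Q' b0 (fun _ => W Zp),
            if_pos hb0Q'] at h
          linarith [h]
        -- equation E6 and the conclusion
        have hext2' : ∀ r : Finset V × Finset (Sym2 V), (ext r).2 = insert s(u, w) r.2 :=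
          fun _ => rfl
        have hAf2 : ∀ j : V, (Af j).2 = insert s(u, j) (P'.erase (pmE P' j)) := fun _ => rfl
        have hBf2 : ∀ j : V, (Bf j).2 = insert s(w, j) (P'.erase (pmE P' j)) := fun _ => rfl
        have hZp2 : Zp.2 = insert s(u, a0) (insert s(w, b0) (P'.erase f0)) := rfl
        have hkR : ((P'.card - 1 : ℕ) : ℝ) = (P'.card : ℝ) - 1 := by
          rw [Nat.cast_sub hk1, Nat.cast_one]
        have hsuwEQ' : s(u, w) ∉ EQ' := fun hc => hEQ'nu _ hc (Sym2.mem_mk_left _ _)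
        have hsuiEQ' : ∀ i : V, s(u, i) ∉ EQ' := fun i hc => hEQ'nu _ hc (Sym2.mem_mk_left _ _)
        have hswiEQ' : ∀ i : V, s(w, i) ∉ EQ' := fun i hc => hEQ'nw _ hc (Sym2.mem_mk_left _ _)
        have hfe : Q'.filter (· ∈ (∅ : Finset V)) = ∅ := by simp
        have hUpZ : W Up = W Zp := by linarith [E3, SB]
        have hWpZ : W Wp = W Zp := by linarith [E4, SA]
        have hZ0 : W Zp = 0 := by
          have h := coordsum_L hv Q' EQ'
          rw [hsplit (fun q => W q * (((Q'.filter (· ∈ q.1)).card : ℝ)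
            + ((EQ'.filter (· ∈ q.2)).card : ℝ)))] at h
          have c1 : ∑ r ∈ F', W (ext r) * (((Q'.filter (· ∈ (ext r).1)).card : ℝ)
              + ((EQ'.filter (· ∈ (ext r).2)).card : ℝ)) = 0 := by
            have hc : ∀ r ∈ F', W (ext r) * (((Q'.filter (· ∈ (ext r).1)).card : ℝ)
                + ((EQ'.filter (· ∈ (ext r).2)).card : ℝ))
                = W (ext r) * (P'.card : ℝ) := by
              intro r hr
              rw [hext1, hext2', filter_of_subset (hF'S r hr),
                filter_insert_nm hsuwEQ' (hF'q2EQ' r hr)]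
              have htight := (hF'mem r hr).2.2.2
              have hnat : r.1.card + r.2.card = P'.card := by omega
              have : ((r.1.card : ℝ) + (r.2.card : ℝ)) = (P'.card : ℝ) := by
                exact_mod_cast congrArg (fun n : ℕ => (n : ℝ)) hnat
              rw [this]
            rw [Finset.sum_congr rfl hc, ← Finset.sum_mul, E5, zero_mul]
          have c2 : ∑ j ∈ Q', W (Af j) * (((Q'.filter (· ∈ (Af j).1)).card : ℝ)
              + ((EQ'.filter (· ∈ (Af j).2)).card : ℝ))
              = (- W Zp) * ((P'.card : ℝ) - 1) := by
            have hc : ∀ j ∈ Q', W (Af j) * (((Q'.filter (· ∈ (Af j).1)).card : ℝ)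
                + ((EQ'.filter (· ∈ (Af j).2)).card : ℝ))
                = W (Af j) * ((P'.card : ℝ) - 1) := by
              intro j hj
              rw [hAf1, hAf2, filter_singleton_nm hwQ',
                filter_insert_nm (hsuiEQ' j)
                  (fun e he => hP'EQ' (Finset.mem_of_mem_erase he)),
                Finset.card_empty, Finset.card_erase_of_mem (hpm j hj).1,
                Nat.cast_zero, zero_add, hkR]
            rw [Finset.sum_congr rfl hc, ← Finset.sum_mul, SA]
          have c3 : ∑ j ∈ Q', W (Bf j) * (((Q'.filter (· ∈ (Bf j).1)).card : ℝ)
              + ((EQ'.filter (· ∈ (Bf j).2)).card : ℝ))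
              = (- W Zp) * ((P'.card : ℝ) - 1) := by
            have hc : ∀ j ∈ Q', W (Bf j) * (((Q'.filter (· ∈ (Bf j).1)).card : ℝ)
                + ((EQ'.filter (· ∈ (Bf j).2)).card : ℝ))
                = W (Bf j) * ((P'.card : ℝ) - 1) := by
              intro j hj
              rw [hBf1, hBf2, filter_singleton_nm huQ',
                filter_insert_nm (hswiEQ' j)
                  (fun e he => hP'EQ' (Finset.mem_of_mem_erase he)),
                Finset.card_empty, Finset.card_erase_of_mem (hpm j hj).1,
                Nat.cast_zero, zero_add, hkR]
            rw [Finset.sum_congr rfl hc, ← Finset.sum_mul, SB]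
          have c4 : W Up * (((Q'.filter (· ∈ Up.1)).card : ℝ)
              + ((EQ'.filter (· ∈ Up.2)).card : ℝ)) = W Zp * (P'.card : ℝ) := by
            rw [hUp1, hUp2, filter_singleton_nm huQ', filter_of_subset hP'EQ',
              Finset.card_empty, Nat.cast_zero, zero_add, hUpZ]
          have c5 : W Wp * (((Q'.filter (· ∈ Wp.1)).card : ℝ)
              + ((EQ'.filter (· ∈ Wp.2)).card : ℝ)) = W Zp * (P'.card : ℝ) := by
            rw [hWp1, hWp2, filter_singleton_nm hwQ', filter_of_subset hP'EQ',
              Finset.card_empty, Nat.cast_zero, zero_add, hWpZ]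
          have c6 : W Zp * (((Q'.filter (· ∈ Zp.1)).card : ℝ)
              + ((EQ'.filter (· ∈ Zp.2)).card : ℝ)) = W Zp * ((P'.card : ℝ) - 1) := by
            rw [hZp1, hZp2, hfe, filter_insert_nm' (hsuiEQ' a0),
              filter_insert_nm (hswiEQ' b0)
                (fun e he => hP'EQ' (Finset.mem_of_mem_erase he)),
              Finset.card_empty, Finset.card_erase_of_mem hf0P,
              Nat.cast_zero, zero_add, hkR]
          rw [c1, c2, c3, c4, c5, c6] at h
          have hfact : W Zp * ((P'.card : ℝ) + 1) = 0 := by linear_combination h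
          have hne : ((P'.card : ℝ) + 1) ≠ 0 := Nat.cast_add_one_ne_zero P'.card
          exact (mul_eq_zero.1 hfact).resolve_right hne
        have hAf0 : ∀ j ∈ Q', W (Af j) = 0 := by
          intro j hj
          have h := E1 j hj
          rw [hZ0] at h
          simpa using h
        have hBf0 : ∀ j ∈ Q', W (Bf j) = 0 := by
          intro j hj
          have h := E2 j hj
          rw [hZ0] at h
          simpa using h
        have hUp0 : W Up = 0 := by rw [hUpZ, hZ0]
        have hWp0 : W Wp = 0 := by rw [hWpZ, hZ0]
        -- reduce the vector equation to the old family
        have hvext : ∑ r ∈ F', W (ext r) • charVec r.1 r.2 = 0 := by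
          have h := hv
          rw [sum_split5 hextInj hAfInj hBfInj dis12 dis13 dis14 hUW hUZ hWZ
            (fun q => W q • charVec q.1 q.2)] at h
          have c2 : ∑ j ∈ Q', W (Af j) • charVec (Af j).1 (Af j).2 = 0 :=
            Finset.sum_eq_zero (fun j hj => by rw [hAf0 j hj, zero_smul])
          have c3 : ∑ j ∈ Q', W (Bf j) • charVec (Bf j).1 (Bf j).2 = 0 :=
            Finset.sum_eq_zero (fun j hj => by rw [hBf0 j hj, zero_smul])
          rw [c2, c3, hUp0, hWp0, hZ0, zero_smul, zero_smul, zero_smul] at h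
          simp only [add_zero, zero_add] at h
          have hc : ∀ r ∈ F', W (ext r) • charVec (ext r).1 (ext r).2
              = W (ext r) • charVec r.1 r.2 + W (ext r) •
                ((0 : V → ℝ), fun e => if e = s(u, w) then (1 : ℝ) else 0) := by
            intro r hr
            rw [hext1, hext2', charVec_insert (heuwF' r hr), smul_add]
          rw [Finset.sum_congr rfl hc, Finset.sum_add_distrib, ← Finset.sum_smul, E5,
            zero_smul, add_zero] at h
          exact h
        have hext0 : ∀ r ∈ F', W (ext r) = 0 :=
          (afi_charVec_iff F').1 hF'ai (fun q => W (ext q)) E5 hvext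
        rcases Finset.mem_union.1 hq with hq1 | hq1
        · rcases Finset.mem_union.1 hq1 with hq2 | hq2
          · rcases Finset.mem_union.1 hq2 with hq3 | hq3
            · obtain ⟨r, hr, rfl⟩ := Finset.mem_image.1 hq3
              exact hext0 r hr
            · obtain ⟨i, hi, rfl⟩ := Finset.mem_image.1 hq3
              exact hAf0 i hi
          · obtain ⟨i, hi, rfl⟩ := Finset.mem_image.1 hq2
            exact hBf0 i hi
        · simp only [Finset.mem_insert, Finset.mem_singleton] at hq1
          rcases hq1 with rfl | rfl | rfl
          · exact hUp0
          · exact hWp0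
          · exact hZ0

/-- For a clique `Q` of `G` of even cardinality `h ≥ 2`, the even-clique inequality
`∑_{v ∈ V(K_h)} x_v + ∑_{e ∈ E(K_h)} y_e ≤ h/2` is valid for the total matching polytope
and facet-defining: there exist `n + m` affinely independent characteristic vectors of
total matchings satisfying it with equality. -/
theorem even_clique_facet [Fintype V] [DecidableEq V]
    (G : SimpleGraph V) [DecidableRel G.Adj] (Q : Finset V) (h : ℕ)
    (hh : 2 ≤ h) (heven : Even h) (hQ : G.IsClique ↑Q) (hcard : Q.card = h) :
    (∀ p ∈ totalMatchingPolytope G,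
      ∑ v ∈ Q, p.1 v + ∑ e ∈ G.edgeFinset.filter (fun e => ∀ v ∈ e, v ∈ Q), p.2 e
        ≤ (h : ℝ) / 2) ∧
    ∃ F : Finset (Finset V × Finset (Sym2 V)),
      F.card = Fintype.card V + G.edgeFinset.card ∧
      (∀ q ∈ F, IsTotalMatching G q.1 q.2 ∧
        ∑ v ∈ Q, (charVec q.1 q.2).1 v +
          ∑ e ∈ G.edgeFinset.filter (fun e => ∀ v ∈ e, v ∈ Q), (charVec q.1 q.2).2 e
            = (h : ℝ) / 2) ∧
      AffineIndependent ℝ (fun q : F => charVec q.1.1 q.1.2) := by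
  classical
  have hevQ : Even Q.card := hcard ▸ heven
  set EQ := G.edgeFinset.filter (fun e => ∀ v ∈ e, v ∈ Q) with hEQdef
  constructor
  · -- validity
    intro p hp
    have hsub : {p | ∃ S M, IsTotalMatching G S M ∧ p = charVec S M} ⊆
        {p : (V → ℝ) × (Sym2 V → ℝ) | evalL Q EQ p ≤ (h : ℝ) / 2} := by
      rintro p ⟨S, M, hTM, rfl⟩
      have hval := valid_nat G hQ hevQ hTM
      rw [← hEQdef] at hval
      rw [Set.mem_setOf_eq, evalL_charVec]
      rw [le_div_iff₀ (by norm_num : (0 : ℝ) < 2)]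
      have : ((Q.filter (· ∈ S)).card + (EQ.filter (· ∈ M)).card) * 2 ≤ h := by omega
      exact_mod_cast this
    have hconv : Convex ℝ {p : (V → ℝ) × (Sym2 V → ℝ) | evalL Q EQ p ≤ (h : ℝ) / 2} :=
      convex_halfSpace_le (evalL Q EQ).isLinear _
    have hle := convexHull_min hsub hconv hp
    rw [Set.mem_setOf_eq, evalL_apply] at hle
    exact hle
  · -- the facet family
    obtain ⟨Floc, hFlcard, hFlmem, hFlai⟩ := local_family G Q.card Q rfl hQ hevQ
    obtain ⟨P, hP1, hP2, hP3, hP4, hP5⟩ := exists_pm G Q.card Q rfl hQ hevQ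
    have hPEQ : P ⊆ EQ :=
      fun e he => Finset.mem_filter.2 ⟨SimpleGraph.mem_edgeFinset.2 (hP1 he), hP3 e he⟩
    have h2P : 2 * P.card = h := by omega
    have hFlEQ : ∀ q ∈ Floc, q.2 ⊆ EQ := by
      intro q hq e he
      exact Finset.mem_filter.2 ⟨((hFlmem q hq).2.2.1 e he).1, ((hFlmem q hq).2.2.1 e he).2⟩
    -- the tightness bridge
    have tight_of : ∀ S : Finset V, ∀ M : Finset (Sym2 V),
        (Q.filter (· ∈ S)).card + (EQ.filter (· ∈ M)).card = P.card →
        ∑ v ∈ Q, (charVec S M).1 v + ∑ e ∈ EQ, (charVec S M).2 e = (h : ℝ) / 2 := by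
      intro S M hcnt
      rw [← evalL_apply, evalL_charVec]
      rw [eq_div_iff (by norm_num : (2 : ℝ) ≠ 0)]
      have : ((Q.filter (· ∈ S)).card + (EQ.filter (· ∈ M)).card) * 2 = h := by omega
      exact_mod_cast this
    set Tv : V → Finset V × Finset (Sym2 V) := fun v => ({v}, P) with hTvdef
    set Te : Sym2 V → Finset V × Finset (Sym2 V) := fun e =>
      if hz : ∃ z, z ∈ e ∧ z ∈ Q then
        ({otherV (pmE P hz.choose) hz.choose}, insert e (P.erase (pmE P hz.choose)))
      else (∅, insert e P) with hTedef
    -- facts about Te on edges outside the clique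
    have hTeFacts : ∀ e ∈ G.edgeFinset \ EQ, IsTotalMatching G (Te e).1 (Te e).2 ∧
        (Te e).1 ⊆ Q ∧ e ∈ (Te e).2 ∧ (∀ g ∈ (Te e).2, g = e ∨ g ∈ P) ∧
        (Q.filter (· ∈ (Te e).1)).card + (EQ.filter (· ∈ (Te e).2)).card = P.card := by
      intro e he
      obtain ⟨he1, he2⟩ := Finset.mem_sdiff.1 he
      have heEQ : e ∉ EQ := he2
      have heP : e ∉ P := fun hc => heEQ (hPEQ hc)
      have hy : ∃ y ∈ e, y ∉ Q := by
        by_contra hc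
        push_neg at hc
        exact heEQ (Finset.mem_filter.2 ⟨he1, hc⟩)
      by_cases hz : ∃ z, z ∈ e ∧ z ∈ Q
      · have hTeeq : Te e = ({otherV (pmE P hz.choose) hz.choose},
            insert e (P.erase (pmE P hz.choose))) := by
          simp only [hTedef]
          rw [dif_pos hz]
        set z0 := hz.choose with hz0def
        have hz0e : z0 ∈ e := hz.choose_spec.1
        have hz0Q : z0 ∈ Q := hz.choose_spec.2
        set fz := pmE P z0 with hfzdef
        have hfzP : fz ∈ P := (pmE_spec (hP4 z0 hz0Q)).1
        have hz0fz : z0 ∈ fz := (pmE_spec (hP4 z0 hz0Q)).2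
        set z1 := otherV fz z0 with hz1def
        have hfzeq : fz = s(z0, z1) := otherV_spec hz0fz
        have hz1fz : z1 ∈ fz := otherV_mem hz0fz
        have hz1Q : z1 ∈ Q := hP3 fz hfzP z1 hz1fz
        set y := otherV e z0 with hydef
        have heeq : e = s(z0, y) := otherV_spec hz0e
        have hye : y ∈ e := otherV_mem hz0e
        have hyQ : y ∉ Q := by
          obtain ⟨t, hte, htQ⟩ := hy
          have : t ∈ s(z0, y) := by rw [← heeq]; exact hte
          rcases Sym2.mem_iff.1 this with rfl | rfl
          · exact absurd hz0Q htQ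
          · exact htQ
        have hz1e : z1 ∉ e := by
          intro hc
          have : z1 ∈ s(z0, y) := by rw [← heeq]; exact hc
          rcases Sym2.mem_iff.1 this with hc' | hc'
          · have hd := G.not_isDiag_of_mem_edgeSet (hP1 hfzP)
            rw [hfzeq, hc'] at hd
            exact hd (Sym2.mk_isDiag_iff.2 rfl)
          · exact hyQ (hc' ▸ hz1Q)
        have hefz : e ≠ fz := by
          intro hc
          exact hyQ (hP3 fz hfzP y (hc ▸ hye))
        have hmemedge : ∀ v, v ∈ e → v = z0 ∨ v = y := by
          intro v hv
          have : v ∈ s(z0, y) := by rw [← heeq]; exact hv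
          exact Sym2.mem_iff.1 this
        rw [hTeeq]
        refine ⟨⟨?_, ?_, ?_, ?_⟩, ?_, Finset.mem_insert_self _ _, ?_, ?_⟩
        · intro g hg
          rw [Finset.coe_insert, Set.mem_insert_iff] at hg
          rcases hg with rfl | hg
          · exact SimpleGraph.mem_edgeFinset.1 he1
          · exact hP1 (Finset.mem_of_mem_erase hg)
        · intro v hv v' hv'
          rw [Finset.mem_singleton] at hv hv'
          subst hv; subst hv'
          simp
        · refine PD.insert (hP2.subset (Finset.erase_subset _ _)) (fun f hf v hv => ?_)
          rcases hmemedge v hv.1 with rfl | rfl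
          · exact Finset.ne_of_mem_erase hf
              (hP2.eq_of_mem (Finset.mem_of_mem_erase hf) hfzP hv.2 hz0fz)
          · exact hyQ (hP3 f (Finset.mem_of_mem_erase hf) _ hv.2)
        · intro v hv g hg
          rw [Finset.mem_singleton] at hv
          subst hv
          rcases Finset.mem_insert.1 hg with rfl | hg
          · exact hz1e
          · intro hc
            exact Finset.ne_of_mem_erase hg
              (hP2.eq_of_mem (Finset.mem_of_mem_erase hg) hfzP hc hz1fz)
        · intro v hv
          rw [Finset.mem_singleton] at hv
          subst hv
          exact hz1Q
        · intro g hg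
          rcases Finset.mem_insert.1 hg with rfl | hg
          · exact Or.inl rfl
          · exact Or.inr (Finset.mem_of_mem_erase hg)
        · rw [filter_of_subset (Finset.singleton_subset_iff.2 hz1Q),
            filter_insert_nm heEQ (fun g hg => hPEQ (Finset.mem_of_mem_erase hg)),
            Finset.card_singleton, Finset.card_erase_of_mem hfzP]
          have hk1 : 1 ≤ P.card := by
            have : 0 < Q.card := Finset.card_pos.2 ⟨z0, hz0Q⟩
            omega
          omega
      · have hTeeq : Te e = (∅, insert e P) := by
          simp only [hTedef]
          rw [dif_neg hz]
        push_neg at hz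
        rw [hTeeq]
        refine ⟨⟨?_, by simp, ?_, by simp⟩, by simp, Finset.mem_insert_self _ _, ?_, ?_⟩
        · intro g hg
          rw [Finset.coe_insert, Set.mem_insert_iff] at hg
          rcases hg with rfl | hg
          · exact SimpleGraph.mem_edgeFinset.1 he1
          · exact hP1 hg
        · refine PD.insert hP2 (fun f hf v hv => ?_)
          exact hz v hv.1 (hP3 f hf v hv.2)
        · intro g hg
          rcases Finset.mem_insert.1 hg with rfl | hg
          · exact Or.inl rfl
          · exact Or.inr hg
        · rw [filter_insert_nm heEQ hPEQ]
          simp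
    have hTvFacts : ∀ v ∈ Finset.univ \ Q, IsTotalMatching G (Tv v).1 (Tv v).2 ∧
        (Q.filter (· ∈ (Tv v).1)).card + (EQ.filter (· ∈ (Tv v).2)).card = P.card := by
      intro v hv
      have hvQ : v ∉ Q := (Finset.mem_sdiff.1 hv).2
      constructor
      · refine ⟨hP1, ?_, hP2, ?_⟩
        · intro a ha b hb
          rw [Finset.mem_singleton] at ha hb
          subst ha; subst hb
          simp
        · intro a ha g hg
          rw [Finset.mem_singleton] at ha
          subst ha
          exact fun hc => hvQ (hP3 g hg a hc)
      · rw [filter_singleton_nm hvQ, filter_of_subset hPEQ]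
        simp
    -- injectivity and disjointness
    have hTvInj : ∀ x ∈ Finset.univ \ Q, ∀ y ∈ Finset.univ \ Q, Tv x = Tv y → x = y := by
      intro x _ y _ hxy
      exact Finset.singleton_injective (congrArg Prod.fst hxy)
    have hTeInj : ∀ x ∈ G.edgeFinset \ EQ, ∀ y ∈ G.edgeFinset \ EQ, Te x = Te y → x = y := by
      intro x hx y hy hxy
      have hmx : x ∈ (Te y).2 := by
        rw [← hxy]
        exact (hTeFacts x hx).2.2.1
      rcases (hTeFacts y hy).2.2.2.1 x hmx with hc | hc
      · exact hc
      · exact absurd (hPEQ hc) (Finset.mem_sdiff.1 hx).2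
    have d1 : Disjoint Floc ((Finset.univ \ Q).image Tv) := by
      rw [Finset.disjoint_right]
      intro q hq1 hq2
      obtain ⟨v, hv, rfl⟩ := Finset.mem_image.1 hq1
      have hvQ : v ∉ Q := (Finset.mem_sdiff.1 hv).2
      exact hvQ ((hFlmem _ hq2).2.1 (Finset.mem_singleton_self v))
    have d2 : Disjoint (Floc ∪ (Finset.univ \ Q).image Tv)
        ((G.edgeFinset \ EQ).image Te) := by
      rw [Finset.disjoint_right]
      intro q hq1 hq2
      obtain ⟨e, he, rfl⟩ := Finset.mem_image.1 hq1
      have heEQ : e ∉ EQ := (Finset.mem_sdiff.1 he).2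
      have hme : e ∈ (Te e).2 := (hTeFacts e he).2.2.1
      rcases Finset.mem_union.1 hq2 with hq3 | hq3
      · exact heEQ (hFlEQ _ hq3 hme)
      · obtain ⟨v, hv, hveq⟩ := Finset.mem_image.1 hq3
        have hsnd : P = (Te e).2 := congrArg Prod.snd hveq
        rw [← hsnd] at hme
        exact heEQ (hPEQ hme)
    refine ⟨(Floc ∪ (Finset.univ \ Q).image Tv) ∪ (G.edgeFinset \ EQ).image Te, ?_, ?_, ?_⟩
    · rw [Finset.card_union_of_disjoint d2, Finset.card_union_of_disjoint d1,
        Finset.card_image_of_injOn hTvInj, Finset.card_image_of_injOn hTeInj,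
        Finset.card_sdiff_of_subset (Finset.subset_univ Q), Finset.card_sdiff_of_subset (Finset.filter_subset _ _),
        Finset.card_univ]
      have hQle : Q.card ≤ Fintype.card V := by
        rw [← Finset.card_univ]
        exact Finset.card_le_card (Finset.subset_univ Q)
      have hEQle : EQ.card ≤ G.edgeFinset.card := Finset.card_le_card (Finset.filter_subset _ _)
      rw [← hEQdef] at hFlcard
      rw [← hEQdef]
      omega
    · intro q hq
      rcases Finset.mem_union.1 hq with hq1 | hq1
      · rcases Finset.mem_union.1 hq1 with hq2 | hq2
        · refine ⟨(hFlmem q hq2).1, tight_of q.1 q.2 ?_⟩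
          rw [filter_of_subset ((hFlmem q hq2).2.1), filter_of_subset (hFlEQ q hq2)]
          have := (hFlmem q hq2).2.2.2
          omega
        · obtain ⟨v, hv, rfl⟩ := Finset.mem_image.1 hq2
          exact ⟨(hTvFacts v hv).1, tight_of _ _ (hTvFacts v hv).2⟩
      · obtain ⟨e, he, rfl⟩ := Finset.mem_image.1 hq1
        exact ⟨(hTeFacts e he).1, tight_of _ _ (hTeFacts e he).2.2.2.2⟩
    · -- affine independence
      refine (afi_charVec_iff _).2 ?_
      intro W hs hv q hq
      have hsplit : ∀ g : Finset V × Finset (Sym2 V) → ℝ,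
          ∑ r ∈ (Floc ∪ (Finset.univ \ Q).image Tv) ∪ (G.edgeFinset \ EQ).image Te, g r
          = (∑ r ∈ Floc, g r + ∑ v ∈ Finset.univ \ Q, g (Tv v))
            + ∑ e ∈ G.edgeFinset \ EQ, g (Te e) := by
        intro g
        rw [Finset.sum_union d2, Finset.sum_union d1, Finset.sum_image hTvInj,
          Finset.sum_image hTeInj]
      have hTe0 : ∀ e ∈ G.edgeFinset \ EQ, W (Te e) = 0 := by
        intro e he
        have heEQ : e ∉ EQ := (Finset.mem_sdiff.1 he).2
        have h := coordsum_Y hv e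
        rw [hsplit (fun q => if e ∈ q.2 then W q else 0)] at h
        have c1 : ∑ r ∈ Floc, (if e ∈ r.2 then W r else 0) = 0 :=
          Finset.sum_eq_zero (fun r hr => if_neg (fun hc => heEQ (hFlEQ r hr hc)))
        have c2 : ∑ v ∈ Finset.univ \ Q, (if e ∈ (Tv v).2 then W (Tv v) else 0) = 0 :=
          Finset.sum_eq_zero (fun v hv' => if_neg (fun hc => heEQ (hPEQ hc)))
        have c3 : ∑ e' ∈ G.edgeFinset \ EQ, (if e ∈ (Te e').2 then W (Te e') else 0)
            = W (Te e) := by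
          have hc : ∀ e' ∈ G.edgeFinset \ EQ, (if e ∈ (Te e').2 then W (Te e') else 0)
              = (if e' = e then W (Te e') else 0) := by
            intro e' he'
            by_cases hee : e' = e
            · subst hee
              rw [if_pos ((hTeFacts e' he').2.2.1), if_pos rfl]
            · rw [if_neg ?_, if_neg hee]
              intro hc
              rcases (hTeFacts e' he').2.2.2.1 e hc with hc' | hc'
              · exact hee hc'.symm
              · exact heEQ (hPEQ hc')
          rw [Finset.sum_congr rfl hc,
            Finset.sum_ite_eq' (G.edgeFinset \ EQ) e (fun e' => W (Te e')), if_pos he]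
        rw [c1, c2, c3] at h
        linarith [h]
      have hTv0 : ∀ v ∈ Finset.univ \ Q, W (Tv v) = 0 := by
        intro v hv'
        have hvQ : v ∉ Q := (Finset.mem_sdiff.1 hv').2
        have h := coordsum_X hv v
        rw [hsplit (fun q => if v ∈ q.1 then W q else 0)] at h
        have c1 : ∑ r ∈ Floc, (if v ∈ r.1 then W r else 0) = 0 :=
          Finset.sum_eq_zero (fun r hr => if_neg (fun hc => hvQ ((hFlmem r hr).2.1 hc)))
        have c2 : ∑ v' ∈ Finset.univ \ Q, (if v ∈ (Tv v').1 then W (Tv v') else 0)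
            = W (Tv v) := by
          have hc : ∀ v' ∈ Finset.univ \ Q, (if v ∈ (Tv v').1 then W (Tv v') else 0)
              = (if v' = v then W (Tv v') else 0) := by
            intro v' hv''
            by_cases hvv : v' = v
            · subst hvv
              rw [if_pos (Finset.mem_singleton_self v'), if_pos rfl]
            · rw [if_neg (fun hc => hvv (Finset.mem_singleton.1 hc).symm), if_neg hvv]
          rw [Finset.sum_congr rfl hc,
            Finset.sum_ite_eq' (Finset.univ \ Q) v (fun v' => W (Tv v')), if_pos hv']
        have c3 : ∑ e' ∈ G.edgeFinset \ EQ, (if v ∈ (Te e').1 then W (Te e') else 0) = 0 :=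
          Finset.sum_eq_zero (fun e' he' =>
            if_neg (fun hc => hvQ ((hTeFacts e' he').2.1 hc)))
        rw [c1, c2, c3] at h
        linarith [h]
      have hvloc : ∑ r ∈ Floc, W r • charVec r.1 r.2 = 0 := by
        have h := hv
        rw [Finset.sum_union d2, Finset.sum_union d1, Finset.sum_image hTvInj,
          Finset.sum_image hTeInj] at h
        have c2 : ∑ v ∈ Finset.univ \ Q, W (Tv v) • charVec (Tv v).1 (Tv v).2 = 0 :=
          Finset.sum_eq_zero (fun v hv' => by rw [hTv0 v hv', zero_smul])
        have c3 : ∑ e ∈ G.edgeFinset \ EQ, W (Te e) • charVec (Te e).1 (Te e).2 = 0 :=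
          Finset.sum_eq_zero (fun e he => by rw [hTe0 e he, zero_smul])
        rw [c2, c3, add_zero, add_zero] at h
        exact h
      have hsloc : ∑ r ∈ Floc, W r = 0 := by
        have h := hs
        rw [hsplit (fun q => W q)] at h
        rw [Finset.sum_eq_zero hTv0, Finset.sum_eq_zero hTe0] at h
        linarith [h]
      have hloc0 := (afi_charVec_iff Floc).1 hFlai W hsloc hvloc
      rcases Finset.mem_union.1 hq with hq1 | hq1
      · rcases Finset.mem_union.1 hq1 with hq2 | hq2
        · exact hloc0 q hq2
        · obtain ⟨v, hv', rfl⟩ := Finset.mem_image.1 hq2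
          exact hTv0 v hv'
      · obtain ⟨e, he, rfl⟩ := Finset.mem_image.1 hq1
        exact hTe0 e he
end

section
/- Let G=(V,E) be a finite simple graph, let h be an odd positive integer, let Q ⊆ V be a clique of size h inducing K_h, and suppose there is a vertex u ∉ Q such that Q ∪ {u} is also a clique of G, inducing K_{h+1}. Then: (a) the odd-clique inequality is valid, i.e. every total matching T of G satisfies |T ∩ (V(K_h) ∪ E(K_h))| ≤ (h+1)/2; (b) every total matching T with |T ∩ (V(K_h) ∪ E(K_h))| = (h+1)/2 also satisfies |T ∩ (V(K_{h+1}) ∪ E(K_{h+1}))| = (h+1)/2; and (c) there exists a total matching T' of G with |T' ∩ (V(K_{h+1}) ∪ E(K_{h+1}))| = (h+1)/2 but |T' ∩ (V(K_h) ∪ E(K_h))| < (h+1)/2. Consequently the face of the Total Matching Polytope P_T(G) induced by the odd-clique inequality on K_h is strictly contained in the face induced by the even-clique inequality on K_{h+1}, so the odd-clique inequality is not facet-defining. -/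
open Finset

variable {V : Type*}

section Aux
variable [Fintype V] [DecidableEq V]

lemma edge_verts_card (G : SimpleGraph V) (Q : Finset V) (e : Sym2 V)
    (he : e ∈ G.edgeSet) (hQe : ∀ v ∈ e, v ∈ Q) : (Q.filter (· ∈ e)).card = 2 := by
  induction e using Sym2.ind with
  | _ a b =>
    rw [SimpleGraph.mem_edgeSet] at he
    have hab : a ≠ b := he.ne
    have heq : Q.filter (· ∈ s(a,b)) = {a, b} := by
      ext v
      simp only [mem_filter, Sym2.mem_iff, mem_insert, mem_singleton]
      exact ⟨fun h => h.2, fun h => ⟨h.elim (fun hv => hv ▸ hQe a (by simp))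
        (fun hv => hv ▸ hQe b (by simp)), h⟩⟩
    rw [heq, card_insert_of_notMem (by simp [hab]), card_singleton]

lemma tm_key (G : SimpleGraph V) (Q : Finset V)
    (S : Finset V) (M : Finset (Sym2 V)) (hTM : IsTotalMatching G S M) :
    ((S ∩ Q) ∪ (M.filter fun e => ∀ v ∈ e, v ∈ Q).biUnion (fun e => Q.filter (· ∈ e))) ⊆ Q ∧
    ((S ∩ Q) ∪ (M.filter fun e => ∀ v ∈ e, v ∈ Q).biUnion (fun e => Q.filter (· ∈ e))).card
      = (S ∩ Q).card + 2 * (M.filter fun e => ∀ v ∈ e, v ∈ Q).card := by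
  obtain ⟨hM, hSS, hMM, hSM⟩ := hTM
  refine ⟨?_, ?_⟩
  · intro v hv
    simp only [mem_union, mem_inter, mem_biUnion, mem_filter] at hv
    tauto
  · rw [card_union_of_disjoint, card_biUnion]
    · rw [Finset.sum_congr rfl (fun e he => ?_), Finset.sum_const, smul_eq_mul, mul_comm]
      rw [mem_filter] at he
      exact edge_verts_card G Q e (hM he.1) he.2
    · intro e he f hf hef
      rw [Finset.mem_coe, mem_filter] at he hf
      rw [Function.onFun, Finset.disjoint_left]
      intro v hv1 hv2
      rw [mem_filter] at hv1 hv2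
      exact hMM e he.1 f hf.1 hef v ⟨hv1.2, hv2.2⟩
    · rw [Finset.disjoint_left]
      intro v hv1 hv2
      rw [mem_inter] at hv1
      rw [mem_biUnion] at hv2
      obtain ⟨e, he, hve⟩ := hv2
      rw [mem_filter] at he hve
      exact hSM v hv1.1 e he.1 hve.2

lemma tm_vert_le_one (G : SimpleGraph V) (Q : Finset V) (hQ : G.IsClique ↑Q)
    (S : Finset V) (M : Finset (Sym2 V)) (hTM : IsTotalMatching G S M) :
    (S ∩ Q).card ≤ 1 := by
  obtain ⟨hM, hSS, hMM, hSM⟩ := hTM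
  apply Finset.card_le_one.mpr
  intro a ha b hb
  rw [mem_inter] at ha hb
  by_contra hab
  exact hSS a ha.1 b hb.1 (hQ ha.2 hb.2 hab)

end Aux

/-- Let `Q` be a clique of odd size `h` of `G` contained in a clique `Q ∪ {u}` of size
`h + 1`. Then (a) the odd-clique inequality is valid: every total matching has at most
`(h+1)/2` elements in `K_h`; (b) every total matching with exactly `(h+1)/2` elements in
`K_h` also has exactly `(h+1)/2` elements in `K_{h+1}`; and (c) some total matching has
exactly `(h+1)/2` elements in `K_{h+1}` but fewer than `(h+1)/2` elements in `K_h`.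
Hence the face induced by the odd-clique inequality is strictly contained in the face
induced by the even-clique inequality on `K_{h+1}`, so it is not a facet. -/
theorem odd_clique_not_facet [Fintype V] [DecidableEq V]
    (G : SimpleGraph V) (Q : Finset V) (h : ℕ) (hodd : Odd h) (hcard : Q.card = h)
    (hQ : G.IsClique ↑Q) (u : V) (hu : u ∉ Q) (hQu : G.IsClique ↑(insert u Q)) :
    (∀ (S : Finset V) (M : Finset (Sym2 V)), IsTotalMatching G S M →
      (S ∩ Q).card + (M.filter fun e => ∀ v ∈ e, v ∈ Q).card ≤ (h + 1) / 2) ∧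
    (∀ (S : Finset V) (M : Finset (Sym2 V)), IsTotalMatching G S M →
      (S ∩ Q).card + (M.filter fun e => ∀ v ∈ e, v ∈ Q).card = (h + 1) / 2 →
      (S ∩ insert u Q).card +
        (M.filter fun e => ∀ v ∈ e, v ∈ insert u Q).card = (h + 1) / 2) ∧
    (∃ (S : Finset V) (M : Finset (Sym2 V)), IsTotalMatching G S M ∧
      (S ∩ insert u Q).card +
        (M.filter fun e => ∀ v ∈ e, v ∈ insert u Q).card = (h + 1) / 2 ∧
      (S ∩ Q).card + (M.filter fun e => ∀ v ∈ e, v ∈ Q).card < (h + 1) / 2) := by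
  obtain ⟨k, hk⟩ := hodd
  have valid : ∀ (S : Finset V) (M : Finset (Sym2 V)), IsTotalMatching G S M →
      (S ∩ Q).card + (M.filter fun e => ∀ v ∈ e, v ∈ Q).card ≤ (h + 1) / 2 := by
    intro S M hTM
    obtain ⟨hsub, hcardT⟩ := tm_key G Q S M hTM
    have h1 := tm_vert_le_one G Q hQ S M hTM
    have h2 := Finset.card_le_card hsub
    rw [hcardT, hcard] at h2
    omega
  refine ⟨valid, ?_, ?_⟩
  · -- part (b)
    intro S M hTM heq
    obtain ⟨hM, hSS, hMM, hSM⟩ := hTM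
    obtain ⟨hsub, hcardT⟩ := tm_key G Q S M ⟨hM, hSS, hMM, hSM⟩
    have h1 := tm_vert_le_one G Q hQ S M ⟨hM, hSS, hMM, hSM⟩
    have h2 := Finset.card_le_card hsub
    rw [hcardT, hcard] at h2
    -- forces (S ∩ Q).card = 1 and filter card = k
    have hA : (S ∩ Q).card = 1 := by omega
    have hMq : (M.filter fun e => ∀ v ∈ e, v ∈ Q).card = k := by omega
    -- the union covers all of Q
    have hTQ : ((S ∩ Q) ∪ (M.filter fun e => ∀ v ∈ e, v ∈ Q).biUnion
        (fun e => Q.filter (· ∈ e))) = Q := by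
      apply Finset.eq_of_subset_of_card_le hsub
      rw [hcardT, hcard]; omega
    obtain ⟨v0, hv0⟩ := Finset.card_eq_one.mp hA
    have hv0S : v0 ∈ S := by
      have := hv0 ▸ Finset.mem_singleton_self v0
      exact (Finset.mem_inter.mp (hv0 ▸ Finset.mem_singleton_self v0)).1
    have hv0Q : v0 ∈ Q :=
      (Finset.mem_inter.mp (hv0 ▸ Finset.mem_singleton_self v0)).2
    -- u ∉ S
    have huS : u ∉ S := by
      intro huS
      have hne : u ≠ v0 := fun hc => hu (hc ▸ hv0Q)
      exact hSS u huS v0 hv0S (hQu (by simp) (by simp [hv0Q]) hne)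
    have hSeq : S ∩ insert u Q = S ∩ Q := by
      ext v
      simp only [mem_inter, mem_insert]
      constructor
      · rintro ⟨hvS, rfl | hvQ⟩
        · exact absurd hvS huS
        · exact ⟨hvS, hvQ⟩
      · exact fun ⟨a, b⟩ => ⟨a, Or.inr b⟩
    -- no edge of M contains u and sits in insert u Q
    have hMeq : (M.filter fun e => ∀ v ∈ e, v ∈ insert u Q)
        = (M.filter fun e => ∀ v ∈ e, v ∈ Q) := by
      ext e
      simp only [mem_filter]
      constructor
      · rintro ⟨heM, hein⟩
        refine ⟨heM, fun v hv => ?_⟩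
        rcases Finset.mem_insert.mp (hein v hv) with hvu | hvQ
        · -- v = u ∈ e : derive contradiction
          exfalso
          subst hvu
          -- e has another endpoint w ≠ u, w ∈ Q
          have hee : e ∈ G.edgeSet := hM heM
          have hw := Sym2.other_mem hv
          set w := Sym2.Mem.other hv with hwdef
          have hee2 : s(v, w) ∈ G.edgeSet := by
            rw [hwdef, Sym2.other_spec hv]; exact hee
          have hwu : w ≠ v := (G.mem_edgeSet.mp hee2).ne'
          have hwQ : w ∈ Q := by
            rcases Finset.mem_insert.mp (hein w hw) with hc | hok
            · exact absurd hc hwu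
            · exact hok
          -- w ∈ Q = union, so w ∈ S∩Q or w in an edge of Mq
          have hwT := hTQ ▸ hwQ
          rcases Finset.mem_union.mp hwT with hw1 | hw2
          · -- w ∈ S, but w ∈ e ∈ M
            exact hSM w (Finset.mem_inter.mp hw1).1 e heM hw
          · obtain ⟨f, hf, hwf⟩ := Finset.mem_biUnion.mp hw2
            rw [mem_filter] at hf hwf
            have hef : e ≠ f := by
              intro hc
              exact hu (hf.2 v (hc ▸ hv))
            exact hMM e heM f hf.1 hef w ⟨hw, hwf.2⟩
        · exact hvQ
      · rintro ⟨heM, hein⟩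
        exact ⟨heM, fun v hv => Finset.mem_insert_of_mem (hein v hv)⟩
    rw [hSeq, hMeq]
    exact heq
  · -- part (c)
    set g' : ℕ → V := fun n => if hn : n < Q.card then
      ((Q.equivFin.symm ⟨n, hn⟩ : {x // x ∈ Q}) : V) else u with hg'
    have hg'mem : ∀ n, n < Q.card → g' n ∈ Q := by
      intro n hn
      simp only [hg', dif_pos hn]
      exact Finset.coe_mem _
    have hg'inj : ∀ m n, m < Q.card → n < Q.card → g' m = g' n → m = n := by
      intro m n hm hn hmn
      simp only [hg', dif_pos hm, dif_pos hn] at hmn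
      have := Q.equivFin.symm.injective (Subtype.coe_injective hmn)
      exact congrArg Fin.val this
    set M' : Finset (Sym2 V) := (Finset.range k).image
      (fun i => s(g' (2*i), g' (2*i+1))) with hM'
    have hlt : ∀ i, i < k → 2*i < Q.card ∧ 2*i+1 < Q.card := by
      intro i hi; omega
    have hmemM' : ∀ e ∈ M', ∃ i < k, e = s(g' (2*i), g' (2*i+1)) := by
      intro e he
      obtain ⟨i, hi, hie⟩ := Finset.mem_image.mp he
      exact ⟨i, Finset.mem_range.mp hi, hie.symm⟩
    have hedgeQ : ∀ i, i < k → g' (2*i) ∈ Q ∧ g' (2*i+1) ∈ Q ∧ g' (2*i) ≠ g' (2*i+1) := by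
      intro i hi
      obtain ⟨h1, h2⟩ := hlt i hi
      refine ⟨hg'mem _ h1, hg'mem _ h2, fun hc => ?_⟩
      have := hg'inj _ _ h1 h2 hc
      omega
    have hTM : IsTotalMatching G {u} M' := by
      refine ⟨?_, ?_, ?_, ?_⟩
      · intro e he
        obtain ⟨i, hi, rfl⟩ := hmemM' e he
        obtain ⟨hq1, hq2, hne⟩ := hedgeQ i hi
        exact G.mem_edgeSet.mpr (hQ hq1 hq2 hne)
      · intro v hv w hw
        rw [Finset.mem_singleton] at hv hw
        subst hv; subst hw
        exact G.irrefl
      · intro e he f hf hef v hv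
        obtain ⟨i, hi, rfl⟩ := hmemM' e he
        obtain ⟨j, hj, rfl⟩ := hmemM' f hf
        obtain ⟨hi1, hi2⟩ := hlt i hi
        obtain ⟨hj1, hj2⟩ := hlt j hj
        have hij : i ≠ j := fun hc => hef (by rw [hc])
        obtain ⟨hv1, hv2⟩ := hv
        rw [Sym2.mem_iff] at hv1 hv2
        rcases hv1 with rfl | rfl <;> rcases hv2 with he' | he' <;>
          [ (have := hg'inj _ _ hi1 hj1 he'); (have := hg'inj _ _ hi1 hj2 he');
            (have := hg'inj _ _ hi2 hj1 he'); (have := hg'inj _ _ hi2 hj2 he')] <;>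
          omega
      · intro v hv e he
        rw [Finset.mem_singleton] at hv
        subst hv
        obtain ⟨i, hi, rfl⟩ := hmemM' e he
        obtain ⟨hq1, hq2, _⟩ := hedgeQ i hi
        rw [Sym2.mem_iff]
        rintro (h1 | h1)
        · exact hu (h1 ▸ hq1)
        · exact hu (h1 ▸ hq2)
    have hM'card : M'.card = k := by
      rw [hM', Finset.card_image_of_injOn, Finset.card_range]
      intro i hi j hj hij
      rw [Finset.mem_coe, Finset.mem_range] at hi hj
      obtain ⟨hi1, hi2⟩ := hlt i hi
      obtain ⟨hj1, hj2⟩ := hlt j hj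
      rw [Sym2.eq_iff] at hij
      rcases hij with ⟨h1, h2⟩ | ⟨h1, h2⟩
      · have := hg'inj _ _ hi1 hj1 h1; omega
      · have := hg'inj _ _ hi1 hj2 h1; omega
    have hfQ : (M'.filter fun e => ∀ v ∈ e, v ∈ Q) = M' := by
      apply Finset.filter_true_of_mem
      intro e he v hv
      obtain ⟨i, hi, rfl⟩ := hmemM' e he
      obtain ⟨hq1, hq2, _⟩ := hedgeQ i hi
      rw [Sym2.mem_iff] at hv
      rcases hv with rfl | rfl
      exacts [hq1, hq2]
    have hfQu : (M'.filter fun e => ∀ v ∈ e, v ∈ insert u Q) = M' := by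
      apply Finset.filter_true_of_mem
      intro e he v hv
      refine Finset.mem_insert_of_mem ?_
      obtain ⟨i, hi, rfl⟩ := hmemM' e he
      obtain ⟨hq1, hq2, _⟩ := hedgeQ i hi
      rw [Sym2.mem_iff] at hv
      rcases hv with rfl | rfl
      exacts [hq1, hq2]
    refine ⟨{u}, M', hTM, ?_, ?_⟩
    · rw [hfQu, hM'card]
      have : ({u} : Finset V) ∩ insert u Q = {u} := by
        ext v; simp only [mem_inter, mem_singleton, mem_insert]
        exact ⟨fun hh => hh.1, fun hh => ⟨hh, Or.inl hh⟩⟩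
      rw [this, Finset.card_singleton]
      omega
    · rw [hfQ, hM'card]
      have : ({u} : Finset V) ∩ Q = ∅ := Finset.singleton_inter_of_notMem hu
      rw [this, Finset.card_empty]
      omega
end
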